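/- arXiv:2305.17342 — 2 statements merged into one kernel-verified Lean document; each statement's English description precedes it below -/
import Mathlib

section
/- (Lemma: gradient domination for the attacker.) In a finite two-player Markov game with discount γ ∈ [0,1), reward r : S × A_ν × A_α → [0,1], initial distribution ρ with ρ(s) > 0 for all s, benign attacker policy π̂_α, and ε_π ∈ [0,1]: for any (ν, α) in the product of simplices Δ(A_ν)^{|S|} × Δ(A_α)^{|S|} and any α* ∈ Δ(A_α)^{|S|} minimizing α' ↦ J_{ε_π}(ν, α') over Δ(A_α)^{|S|}, one has J_{ε_π}(ν, α) - min_{α' ∈ Δ(A_α)^{|S|}} J_{ε_π}(ν, α') ≤ (1/(1-γ)) · max_{s ∈ S} (d_ρ^{π_ν, (1-ε_π)π̂_α + ε_π π_{α*}}(s) / ρ(s)) · max_{ᾱ ∈ Δ(A_α)^{|S|}} ⟨∇_α J_{ε_π}(ν, α), α - ᾱ⟩. -/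
open scoped BigOperators RealInnerProductSpace
open Matrix

/-- The state-transition matrix induced by a joint policy. -/
noncomputable def inducedMatrix {S Av Aa : Type*} [Fintype Av] [Fintype Aa]
    (P : S → Av → Aa → S → ℝ) (pinu : S → Av → ℝ) (pialpha : S → Aa → ℝ) :
    Matrix S S ℝ :=
  Matrix.of fun s' s => ∑ av, ∑ aa, pinu s av * pialpha s aa * P s av aa s'

/-- The marginalized reward `r̄_{π_ν,π_α}(s)`. -/
noncomputable def marginalReward {S Av Aa : Type*} [Fintype Av] [Fintype Aa]
    (r : S → Av → Aa → ℝ) (pinu : S → Av → ℝ) (pialpha : S → Aa → ℝ) (s : S) : ℝ :=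
  ∑ av, ∑ aa, pinu s av * pialpha s aa * r s av aa

/-- The objective `J_{ε_π}(ν, α) = V_ρ(π_ν, (1-ε_π)π̂_α + ε_π π_α)` under direct
parameterization, extended near the simplices by the rational formula
`J = ⟨(I - γ P_{π_ν, π_α^mix})⁻¹ ρ, r̄⟩` (the value scaled by `1/(1-γ)` is recovered
as `(1/(1-γ))⟨d, r̄⟩`; here `⟨(I-γP)⁻¹ρ, r̄⟩ = ∑_t γ^t ⟨P^t ρ, r̄⟩` is the value). -/
noncomputable def Jobj {S Av Aa : Type*} [Fintype S] [DecidableEq S]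
    [Fintype Av] [Fintype Aa]
    (P : S → Av → Aa → S → ℝ) (r : S → Av → Aa → ℝ) (γ ε : ℝ)
    (ρ : S → ℝ) (pihat : S → Aa → ℝ)
    (ν : EuclideanSpace ℝ (S × Av)) (α : EuclideanSpace ℝ (S × Aa)) : ℝ :=
  ∑ s, (((1 - γ • inducedMatrix P (fun s a => ν (s, a))
        (fun s a => (1 - ε) * pihat s a + ε * α (s, a)))⁻¹ *ᵥ ρ) s) *
      marginalReward r (fun s a => ν (s, a))
        (fun s a => (1 - ε) * pihat s a + ε * α (s, a)) s

/-- Membership in the product of probability simplices `Δ(A)^{|S|}`, under direct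
parameterization as a Euclidean vector. -/
def inPolicySimplex {S A : Type*} [Fintype A]
    (x : EuclideanSpace ℝ (S × A)) : Prop :=
  (∀ p : S × A, 0 ≤ x p) ∧ ∀ s : S, ∑ a, x (s, a) = 1

/-- The stationary state visitation `d_ρ = (1-γ) ∑_t γ^t P^t ρ`. -/
noncomputable def stateVisitation {S Av Aa : Type*} [Fintype S] [DecidableEq S]
    [Fintype Av] [Fintype Aa]
    (P : S → Av → Aa → S → ℝ) (γ : ℝ) (ρ : S → ℝ)
    (pinu : S → Av → ℝ) (pialpha : S → Aa → ℝ) : S → ℝ :=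
  (1 - γ) • ∑' t : ℕ, γ ^ t • ((inducedMatrix P pinu pialpha ^ t) *ᵥ ρ)



open Matrix

namespace AGDaux

variable {S : Type*} [Fintype S] [DecidableEq S]

lemma pow_entry_nonneg {M : Matrix S S ℝ} (h0 : ∀ i j, 0 ≤ M i j) (t : ℕ) :
    ∀ i j, 0 ≤ (M ^ t) i j := by
  induction t with
  | zero =>
    intro i j
    rcases eq_or_ne i j with h | h <;> simp [Matrix.one_apply, h]
  | succ t ih =>
    intro i j
    rw [pow_succ, Matrix.mul_apply]
    exact Finset.sum_nonneg fun k _ => mul_nonneg (ih i k) (h0 k j)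

lemma pow_colsum {M : Matrix S S ℝ} (h1 : ∀ j, ∑ i, M i j = 1) (t : ℕ) :
    ∀ j, ∑ i, (M ^ t) i j = 1 := by
  induction t with
  | zero =>
    intro j
    simp [Matrix.one_apply]
  | succ t ih =>
    intro j
    simp only [pow_succ, Matrix.mul_apply]
    rw [Finset.sum_comm]
    have : ∀ k, ∑ i, (M ^ t) i k * M k j = M k j := by
      intro k
      rw [← Finset.sum_mul, ih k, one_mul]
    simp only [this]
    exact h1 j

lemma pow_entry_le_one {M : Matrix S S ℝ} (h0 : ∀ i j, 0 ≤ M i j)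
    (h1 : ∀ j, ∑ i, M i j = 1) (t : ℕ) (i j : S) : (M ^ t) i j ≤ 1 := by
  calc (M ^ t) i j ≤ ∑ i', (M ^ t) i' j :=
        Finset.single_le_sum (fun k _ => pow_entry_nonneg h0 t k j) (Finset.mem_univ i)
    _ = 1 := pow_colsum h1 t j

lemma summable_geom_entry {M : Matrix S S ℝ} (h0 : ∀ i j, 0 ≤ M i j)
    (h1 : ∀ j, ∑ i, M i j = 1) {γ : ℝ} (hγ0 : 0 ≤ γ) (hγ1 : γ < 1) (i j : S) :
    Summable (fun t : ℕ => γ ^ t * (M ^ t) i j) := by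
  refine Summable.of_nonneg_of_le
    (fun t => mul_nonneg (pow_nonneg hγ0 t) (pow_entry_nonneg h0 t i j))
    (fun t => ?_) (summable_geometric_of_lt_one hγ0 hγ1)
  calc γ ^ t * (M ^ t) i j ≤ γ ^ t * 1 :=
        mul_le_mul_of_nonneg_left (pow_entry_le_one h0 h1 t i j) (pow_nonneg hγ0 t)
    _ = γ ^ t := mul_one _

/-- Neumann series matrix. -/
noncomputable def neumann (M : Matrix S S ℝ) (γ : ℝ) : Matrix S S ℝ :=
  Matrix.of fun i j => ∑' t : ℕ, γ ^ t * (M ^ t) i j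

lemma one_sub_mul_neumann {M : Matrix S S ℝ} (h0 : ∀ i j, 0 ≤ M i j)
    (h1 : ∀ j, ∑ i, M i j = 1) {γ : ℝ} (hγ0 : 0 ≤ γ) (hγ1 : γ < 1) :
    (1 - γ • M) * neumann M γ = 1 := by
  funext i k
  rw [Matrix.mul_apply]
  have hsum : ∀ j, Summable (fun t : ℕ => γ ^ t * (M ^ t) j k) :=
    fun j => summable_geom_entry h0 h1 hγ0 hγ1 j k
  have step1 : ∀ j, (1 - γ • M) i j * neumann M γ j k
      = (if i = j then neumann M γ j k else 0) - γ * (M i j * neumann M γ j k) := by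
    intro j
    simp only [Matrix.sub_apply, Matrix.smul_apply, Matrix.one_apply, smul_eq_mul]
    rcases eq_or_ne i j with h | h <;> simp [h] <;> ring
  simp only [step1]
  rw [Finset.sum_sub_distrib, Finset.sum_ite_eq, ← Finset.mul_sum]
  simp only [Finset.mem_univ, if_true]
  have swap : ∑ j, M i j * neumann M γ j k = ∑' t : ℕ, γ ^ t * (M ^ (t + 1)) i k := by
    have : ∀ j, M i j * neumann M γ j k = ∑' t : ℕ, M i j * (γ ^ t * (M ^ t) j k) := by
      intro j
      rw [neumann, Matrix.of_apply, ← tsum_mul_left]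
    simp only [this]
    rw [← Summable.tsum_finsetSum (fun j _ => (hsum j).mul_left _)]
    congr 1
    funext t
    rw [pow_succ', Matrix.mul_apply, Finset.mul_sum]
    congr 1
    funext j
    ring
  rw [swap]
  have expand : neumann M γ i k
      = γ ^ 0 * (M ^ 0) i k + ∑' t : ℕ, γ ^ (t + 1) * (M ^ (t + 1)) i k := by
    rw [neumann, Matrix.of_apply]
    exact Summable.tsum_eq_zero_add (summable_geom_entry h0 h1 hγ0 hγ1 i k)
  rw [expand, ← tsum_mul_left]
  have : ∀ t : ℕ, γ * (γ ^ t * (M ^ (t + 1)) i k) = γ ^ (t + 1) * (M ^ (t + 1)) i k := by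
    intro t; ring
  simp only [this]
  simp [Matrix.one_apply, pow_zero]

lemma isUnit_det_one_sub_smul {M : Matrix S S ℝ} (h0 : ∀ i j, 0 ≤ M i j)
    (h1 : ∀ j, ∑ i, M i j = 1) {γ : ℝ} (hγ0 : 0 ≤ γ) (hγ1 : γ < 1) :
    IsUnit (1 - γ • M).det :=
  Matrix.isUnit_det_of_right_inverse (one_sub_mul_neumann h0 h1 hγ0 hγ1)

lemma inv_one_sub_smul {M : Matrix S S ℝ} (h0 : ∀ i j, 0 ≤ M i j)
    (h1 : ∀ j, ∑ i, M i j = 1) {γ : ℝ} (hγ0 : 0 ≤ γ) (hγ1 : γ < 1) :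
    (1 - γ • M)⁻¹ = neumann M γ :=
  Matrix.inv_eq_right_inv (one_sub_mul_neumann h0 h1 hγ0 hγ1)

lemma inv_one_sub_smul_mulVec {M : Matrix S S ℝ} (h0 : ∀ i j, 0 ≤ M i j)
    (h1 : ∀ j, ∑ i, M i j = 1) {γ : ℝ} (hγ0 : 0 ≤ γ) (hγ1 : γ < 1) (ρ : S → ℝ) (s : S) :
    ((1 - γ • M)⁻¹ *ᵥ ρ) s = ∑' t : ℕ, γ ^ t * ((M ^ t *ᵥ ρ) s) := by
  rw [inv_one_sub_smul h0 h1 hγ0 hγ1, Matrix.mulVec, dotProduct]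
  have : ∀ j, neumann M γ s j * ρ j = ∑' t : ℕ, γ ^ t * (M ^ t) s j * ρ j := by
    intro j
    rw [neumann, Matrix.of_apply, ← tsum_mul_right]
  simp only [this]
  rw [← Summable.tsum_finsetSum (fun j _ => ((summable_geom_entry h0 h1 hγ0 hγ1 s j).mul_right _))]
  congr 1
  funext t
  rw [Matrix.mulVec, dotProduct, Finset.mul_sum]
  congr 1
  funext j
  ring

lemma rho_le_inv_mulVec {M : Matrix S S ℝ} (h0 : ∀ i j, 0 ≤ M i j)
    (h1 : ∀ j, ∑ i, M i j = 1) {γ : ℝ} (hγ0 : 0 ≤ γ) (hγ1 : γ < 1)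
    {ρ : S → ℝ} (hρ : ∀ s, 0 ≤ ρ s) (s : S) :
    ρ s ≤ ((1 - γ • M)⁻¹ *ᵥ ρ) s := by
  rw [inv_one_sub_smul_mulVec h0 h1 hγ0 hγ1]
  have hsummable : Summable (fun t : ℕ => γ ^ t * ((M ^ t *ᵥ ρ) s)) := by
    have : ∀ t : ℕ, γ ^ t * ((M ^ t *ᵥ ρ) s) = ∑ j, γ ^ t * (M ^ t) s j * ρ j := by
      intro t
      rw [Matrix.mulVec, dotProduct, Finset.mul_sum]
      congr 1; funext j; ring
    rw [funext this]
    exact summable_sum (fun j _ => ((summable_geom_entry h0 h1 hγ0 hγ1 s j).mul_right _))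
  have h00 : γ ^ 0 * ((M ^ 0 *ᵥ ρ) s) = ρ s := by simp
  calc ρ s = γ ^ 0 * ((M ^ 0 *ᵥ ρ) s) := h00.symm
    _ ≤ ∑' t : ℕ, γ ^ t * ((M ^ t *ᵥ ρ) s) := by
        refine Summable.le_tsum hsummable 0 (fun t _ => ?_)
        refine mul_nonneg (pow_nonneg hγ0 t) ?_
        rw [Matrix.mulVec, dotProduct]
        exact Finset.sum_nonneg fun j _ => mul_nonneg (pow_entry_nonneg h0 t s j) (hρ j)

end AGDaux
set_option linter.unusedSectionVars false

namespace AGDaux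

variable {S Av Aa : Type*} [Fintype S] [DecidableEq S] [Fintype Av] [Fintype Aa]

/-- The transition matrix as a function of the attacker parameter. -/
noncomputable def bigM (P : S → Av → Aa → S → ℝ) (ε : ℝ) (pihat : S → Aa → ℝ)
    (ν : EuclideanSpace ℝ (S × Av)) (x : EuclideanSpace ℝ (S × Aa)) : Matrix S S ℝ :=
  inducedMatrix P (fun s a => ν (s, a)) (fun s a => (1 - ε) * pihat s a + ε * x (s, a))

noncomputable def Amat (P : S → Av → Aa → S → ℝ) (γ ε : ℝ) (pihat : S → Aa → ℝ)
    (ν : EuclideanSpace ℝ (S × Av)) (x : EuclideanSpace ℝ (S × Aa)) : Matrix S S ℝ :=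
  1 - γ • bigM P ε pihat ν x

noncomputable def rbar (r : S → Av → Aa → ℝ) (ε : ℝ) (pihat : S → Aa → ℝ)
    (ν : EuclideanSpace ℝ (S × Av)) (x : EuclideanSpace ℝ (S × Aa)) : S → ℝ :=
  marginalReward r (fun s a => ν (s, a)) (fun s a => (1 - ε) * pihat s a + ε * x (s, a))

noncomputable def dvec (P : S → Av → Aa → S → ℝ) (γ ε : ℝ) (ρ : S → ℝ)
    (pihat : S → Aa → ℝ) (ν : EuclideanSpace ℝ (S × Av))
    (x : EuclideanSpace ℝ (S × Aa)) : S → ℝ :=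
  (Amat P γ ε pihat ν x)⁻¹ *ᵥ ρ

noncomputable def Vvec (P : S → Av → Aa → S → ℝ) (r : S → Av → Aa → ℝ) (γ ε : ℝ)
    (pihat : S → Aa → ℝ) (ν : EuclideanSpace ℝ (S × Av))
    (x : EuclideanSpace ℝ (S × Aa)) : S → ℝ :=
  ((Amat P γ ε pihat ν x)ᵀ)⁻¹ *ᵥ rbar r ε pihat ν x

noncomputable def Qbar (P : S → Av → Aa → S → ℝ) (r : S → Av → Aa → ℝ) (γ ε : ℝ)
    (pihat : S → Aa → ℝ) (ν : EuclideanSpace ℝ (S × Av))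
    (x : EuclideanSpace ℝ (S × Aa)) (s : S) (a : Aa) : ℝ :=
  ∑ av, ν (s, av) * (r s av a + γ * ∑ s', P s av a s' * Vvec P r γ ε pihat ν x s')

section Basic

variable {P : S → Av → Aa → S → ℝ} {r : S → Av → Aa → ℝ} {γ ε : ℝ} {ρ : S → ℝ}
  {pihat : S → Aa → ℝ} {ν : EuclideanSpace ℝ (S × Av)} {x : EuclideanSpace ℝ (S × Aa)}

lemma Jobj_eq : Jobj P r γ ε ρ pihat ν x
    = ∑ s, dvec P γ ε ρ pihat ν x s * rbar r ε pihat ν x s := rfl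

lemma bigM_nonneg (hP0 : ∀ s av aa s', 0 ≤ P s av aa s')
    (hν : inPolicySimplex ν) (hpihat0 : ∀ s a, 0 ≤ pihat s a)
    (hε0 : 0 ≤ ε) (hε1 : ε ≤ 1) (hx : inPolicySimplex x) :
    ∀ s' s, 0 ≤ bigM P ε pihat ν x s' s := by
  intro s' s
  refine Finset.sum_nonneg fun av _ => Finset.sum_nonneg fun aa _ => ?_
  show 0 ≤ ν (s, av) * ((1 - ε) * pihat s aa + ε * x (s, aa)) * P s av aa s'
  refine mul_nonneg (mul_nonneg (hν.1 _) ?_) (hP0 _ _ _ _)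
  have h1 : 0 ≤ (1 - ε) * pihat s aa := mul_nonneg (by linarith) (hpihat0 s aa)
  have h2 : 0 ≤ ε * x (s, aa) := mul_nonneg hε0 (hx.1 _)
  linarith

lemma mix_rowsum (hpihat1 : ∀ s, ∑ a, pihat s a = 1) (hx : inPolicySimplex x) (s : S) :
    ∑ aa, ((1 - ε) * pihat s aa + ε * x (s, aa)) = 1 := by
  rw [Finset.sum_add_distrib, ← Finset.mul_sum, ← Finset.mul_sum, hpihat1 s, hx.2 s]
  ring

lemma bigM_colsum (hP1 : ∀ s av aa, ∑ s', P s av aa s' = 1)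
    (hν : inPolicySimplex ν) (hpihat1 : ∀ s, ∑ a, pihat s a = 1)
    (hx : inPolicySimplex x) :
    ∀ s, ∑ s', bigM P ε pihat ν x s' s = 1 := by
  intro s
  unfold bigM inducedMatrix
  simp only [Matrix.of_apply]
  rw [Finset.sum_comm]
  have key : ∀ av,
      (∑ s', ∑ aa, ν (s, av) * ((1 - ε) * pihat s aa + ε * x (s, aa)) * P s av aa s')
        = ν (s, av) := by
    intro av
    rw [Finset.sum_comm]
    calc ∑ aa, ∑ s', ν (s, av) * ((1 - ε) * pihat s aa + ε * x (s, aa)) * P s av aa s'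
        = ∑ aa, ν (s, av) * ((1 - ε) * pihat s aa + ε * x (s, aa)) := by
          refine Finset.sum_congr rfl fun aa _ => ?_
          simp only [mul_assoc]
          rw [← Finset.mul_sum, ← Finset.mul_sum, hP1 s av aa, mul_one]
      _ = ν (s, av) := by
          rw [← Finset.mul_sum, mix_rowsum hpihat1 hx s, mul_one]
  calc ∑ av, ∑ s', ∑ aa, ν (s, av) * ((1 - ε) * pihat s aa + ε * x (s, aa)) * P s av aa s'
      = ∑ av, ν (s, av) := Finset.sum_congr rfl fun av _ => key av
    _ = 1 := hν.2 s

lemma isUnit_det_Amat (hP0 : ∀ s av aa s', 0 ≤ P s av aa s')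
    (hP1 : ∀ s av aa, ∑ s', P s av aa s' = 1)
    (hγ0 : 0 ≤ γ) (hγ1 : γ < 1)
    (hν : inPolicySimplex ν) (hpihat0 : ∀ s a, 0 ≤ pihat s a)
    (hpihat1 : ∀ s, ∑ a, pihat s a = 1)
    (hε0 : 0 ≤ ε) (hε1 : ε ≤ 1) (hx : inPolicySimplex x) :
    IsUnit (Amat P γ ε pihat ν x).det :=
  isUnit_det_one_sub_smul (bigM_nonneg hP0 hν hpihat0 hε0 hε1 hx)
    (bigM_colsum hP1 hν hpihat1 hx) hγ0 hγ1

/-- Transposed-inverse representation: entries of `Vvec` as column sums against `A⁻¹`. -/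
lemma Vvec_eq_sum (hdet : IsUnit (Amat P γ ε pihat ν x).det) (j : S) :
    Vvec P r γ ε pihat ν x j
      = ∑ s, rbar r ε pihat ν x s * (Amat P γ ε pihat ν x)⁻¹ s j := by
  rw [Vvec, ← Matrix.transpose_nonsing_inv, Matrix.mulVec, dotProduct]
  refine Finset.sum_congr rfl fun s _ => ?_
  rw [Matrix.transpose_apply, mul_comm]

/-- `J = ⟨ρ, V⟩`. -/
lemma Jobj_eq_rhoV (hdet : IsUnit (Amat P γ ε pihat ν x).det) :
    Jobj P r γ ε ρ pihat ν x = ∑ s, ρ s * Vvec P r γ ε pihat ν x s := by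
  rw [Jobj_eq]
  have h1 : ∀ s, dvec P γ ε ρ pihat ν x s * rbar r ε pihat ν x s
      = ∑ j, (Amat P γ ε pihat ν x)⁻¹ s j * ρ j * rbar r ε pihat ν x s := by
    intro s
    rw [dvec, Matrix.mulVec, dotProduct, Finset.sum_mul]
  have h2 : ∀ j, ρ j * Vvec P r γ ε pihat ν x j
      = ∑ s, (Amat P γ ε pihat ν x)⁻¹ s j * ρ j * rbar r ε pihat ν x s := by
    intro j
    rw [Vvec_eq_sum hdet, Finset.mul_sum]
    refine Finset.sum_congr rfl fun s _ => by ring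
  rw [Finset.sum_congr rfl fun s _ => h1 s, Finset.sum_congr rfl fun j _ => h2 j,
    Finset.sum_comm]

/-- Bellman equation, vector form. -/
lemma Amat_transpose_mulVec_Vvec (hdet : IsUnit (Amat P γ ε pihat ν x).det) :
    (Amat P γ ε pihat ν x)ᵀ *ᵥ Vvec P r γ ε pihat ν x = rbar r ε pihat ν x := by
  rw [Vvec, Matrix.mulVec_mulVec, Matrix.mul_nonsing_inv _ (by rwa [Matrix.det_transpose]),
    Matrix.one_mulVec]

/-- Bellman equation, pointwise. -/
lemma Vvec_bellman (hdet : IsUnit (Amat P γ ε pihat ν x).det) (s : S) :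
    Vvec P r γ ε pihat ν x s = rbar r ε pihat ν x s
      + γ * ∑ s', bigM P ε pihat ν x s' s * Vvec P r γ ε pihat ν x s' := by
  have h := congrFun (Amat_transpose_mulVec_Vvec (r := r) hdet) s
  rw [Matrix.mulVec, dotProduct] at h
  have h2 : ∀ s', (Amat P γ ε pihat ν x)ᵀ s s' * Vvec P r γ ε pihat ν x s'
      = ((if s' = s then (1:ℝ) else 0) - γ * bigM P ε pihat ν x s' s)
          * Vvec P r γ ε pihat ν x s' := by
    intro s'
    rw [Matrix.transpose_apply, Amat, Matrix.sub_apply, Matrix.smul_apply, Matrix.one_apply,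
      smul_eq_mul]
  rw [Finset.sum_congr rfl fun s' _ => h2 s'] at h
  simp only [sub_mul, Finset.sum_sub_distrib, ite_mul, zero_mul, one_mul,
    Finset.sum_ite_eq', Finset.mem_univ, if_true] at h
  have h3 : ∑ s', γ * bigM P ε pihat ν x s' s * Vvec P r γ ε pihat ν x s'
      = γ * ∑ s', bigM P ε pihat ν x s' s * Vvec P r γ ε pihat ν x s' := by
    rw [Finset.mul_sum]
    exact Finset.sum_congr rfl fun s' _ => by ring
  rw [h3] at h
  linarith [h]

/-- Expansion of `r̄ + γ (Mᵀ W)` as a policy-weighted `Q`-type sum. -/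
lemma expand_mix (W : S → ℝ) (s : S) :
    rbar r ε pihat ν x s + γ * ∑ s', bigM P ε pihat ν x s' s * W s'
      = ∑ a, ((1 - ε) * pihat s a + ε * x (s, a))
          * (∑ av, ν (s, av) * (r s av a + γ * ∑ s', P s av a s' * W s')) := by
  have hR : ∀ a, ((1 - ε) * pihat s a + ε * x (s, a))
        * (∑ av, ν (s, av) * (r s av a + γ * ∑ s', P s av a s' * W s'))
      = (∑ av, ν (s, av) * ((1 - ε) * pihat s a + ε * x (s, a)) * r s av a)
        + γ * ∑ av, ∑ s', ν (s, av) * ((1 - ε) * pihat s a + ε * x (s, a))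
            * P s av a s' * W s' := by
    intro a
    have h2 : ∀ av, ∑ s', ν (s, av) * ((1 - ε) * pihat s a + ε * x (s, a)) * P s av a s' * W s'
        = ν (s, av) * ((1 - ε) * pihat s a + ε * x (s, a)) * (∑ s', P s av a s' * W s') := by
      intro av
      simp only [mul_assoc]
      rw [← Finset.mul_sum, ← Finset.mul_sum]
    calc ((1 - ε) * pihat s a + ε * x (s, a))
          * (∑ av, ν (s, av) * (r s av a + γ * ∑ s', P s av a s' * W s'))
        = ∑ av, ((1 - ε) * pihat s a + ε * x (s, a))
            * (ν (s, av) * (r s av a + γ * ∑ s', P s av a s' * W s')) := Finset.mul_sum ..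
      _ = ∑ av, (ν (s, av) * ((1 - ε) * pihat s a + ε * x (s, a)) * r s av a
            + γ * ∑ s', ν (s, av) * ((1 - ε) * pihat s a + ε * x (s, a))
                * P s av a s' * W s') := by
          refine Finset.sum_congr rfl fun av _ => ?_
          rw [h2 av]
          ring
      _ = _ := by
          rw [Finset.sum_add_distrib]
          congr 1
          rw [Finset.mul_sum]
  rw [Finset.sum_congr rfl fun a _ => hR a, Finset.sum_add_distrib]
  congr 1
  · rw [rbar, marginalReward, Finset.sum_comm]
  · rw [← Finset.mul_sum]
    congr 1
    have hL : ∀ s', bigM P ε pihat ν x s' s * W s'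
        = ∑ a, ∑ av, ν (s, av) * ((1 - ε) * pihat s a + ε * x (s, a))
            * P s av a s' * W s' := by
      intro s'
      rw [bigM, inducedMatrix, Matrix.of_apply, Finset.sum_mul]
      calc ∑ av, (∑ aa, ν (s, av) * ((1 - ε) * pihat s aa + ε * x (s, aa)) * P s av aa s')
              * W s'
          = ∑ av, ∑ aa, ν (s, av) * ((1 - ε) * pihat s aa + ε * x (s, aa))
              * P s av aa s' * W s' :=
            Finset.sum_congr rfl fun av _ => Finset.sum_mul ..
        _ = ∑ aa, ∑ av, ν (s, av) * ((1 - ε) * pihat s aa + ε * x (s, aa))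
              * P s av aa s' * W s' := Finset.sum_comm
    calc ∑ s', bigM P ε pihat ν x s' s * W s'
        = ∑ s', ∑ a, ∑ av, ν (s, av) * ((1 - ε) * pihat s a + ε * x (s, a))
            * P s av a s' * W s' := Finset.sum_congr rfl fun s' _ => hL s'
      _ = ∑ a, ∑ s', ∑ av, ν (s, av) * ((1 - ε) * pihat s a + ε * x (s, a))
            * P s av a s' * W s' := Finset.sum_comm
      _ = ∑ a, ∑ av, ∑ s', ν (s, av) * ((1 - ε) * pihat s a + ε * x (s, a))
            * P s av a s' * W s' := Finset.sum_congr rfl fun a _ => Finset.sum_comm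

/-- `V(x) s = ∑_a β_x(a|s) Q̄_x(s,a)`. -/
lemma Vvec_eq_policy_Q (hdet : IsUnit (Amat P γ ε pihat ν x).det) (s : S) :
    Vvec P r γ ε pihat ν x s
      = ∑ a, ((1 - ε) * pihat s a + ε * x (s, a)) * Qbar P r γ ε pihat ν x s a := by
  rw [Vvec_bellman hdet s, expand_mix]
  rfl

end Basic

end AGDaux
namespace AGDaux

section PDL

variable {S Av Aa : Type*} [Fintype S] [DecidableEq S] [Fintype Av] [Fintype Aa]
variable {P : S → Av → Aa → S → ℝ} {r : S → Av → Aa → ℝ} {γ ε : ℝ} {ρ : S → ℝ}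
  {pihat : S → Aa → ℝ} {ν : EuclideanSpace ℝ (S × Av)} {x : EuclideanSpace ℝ (S × Aa)}

lemma Amat_transpose_mulVec_apply (x : EuclideanSpace ℝ (S × Aa)) (W : S → ℝ) (s : S) :
    ((Amat P γ ε pihat ν x)ᵀ *ᵥ W) s
      = W s - γ * ∑ s', bigM P ε pihat ν x s' s * W s' := by
  rw [Matrix.mulVec, dotProduct]
  have h2 : ∀ s', (Amat P γ ε pihat ν x)ᵀ s s' * W s'
      = ((if s' = s then (1:ℝ) else 0) * W s') - γ * bigM P ε pihat ν x s' s * W s' := by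
    intro s'
    rw [Matrix.transpose_apply, Amat, Matrix.sub_apply, Matrix.smul_apply, Matrix.one_apply,
      smul_eq_mul]
    ring
  rw [Finset.sum_congr rfl fun s' _ => h2 s', Finset.sum_sub_distrib]
  simp only [ite_mul, zero_mul, one_mul, Finset.sum_ite_eq', Finset.mem_univ, if_true]
  congr 1
  rw [Finset.mul_sum]
  exact Finset.sum_congr rfl fun s' _ => by ring

lemma rho_pair_swap (x : EuclideanSpace ℝ (S × Aa)) (g : S → ℝ) :
    ∑ s, ρ s * (((Amat P γ ε pihat ν x)ᵀ)⁻¹ *ᵥ g) s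
      = ∑ s, dvec P γ ε ρ pihat ν x s * g s := by
  have h1 : ∀ s, ρ s * (((Amat P γ ε pihat ν x)ᵀ)⁻¹ *ᵥ g) s
      = ∑ j, (Amat P γ ε pihat ν x)⁻¹ j s * ρ s * g j := by
    intro s
    rw [← Matrix.transpose_nonsing_inv, Matrix.mulVec, dotProduct, Finset.mul_sum]
    exact Finset.sum_congr rfl fun j _ => by rw [Matrix.transpose_apply]; ring
  have h2 : ∀ j, dvec P γ ε ρ pihat ν x j * g j
      = ∑ s, (Amat P γ ε pihat ν x)⁻¹ j s * ρ s * g j := by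
    intro j
    rw [dvec, Matrix.mulVec, dotProduct, Finset.sum_mul]
  rw [Finset.sum_congr rfl fun s _ => h1 s, Finset.sum_congr rfl fun j _ => h2 j,
    Finset.sum_comm]

/-- Performance-difference lemma. -/
lemma pdl (hP0 : ∀ s av aa s', 0 ≤ P s av aa s')
    (hP1 : ∀ s av aa, ∑ s', P s av aa s' = 1)
    (hγ0 : 0 ≤ γ) (hγ1 : γ < 1)
    (hν : inPolicySimplex ν) (hpihat0 : ∀ s a, 0 ≤ pihat s a)
    (hpihat1 : ∀ s, ∑ a, pihat s a = 1)
    (hε0 : 0 ≤ ε) (hε1 : ε ≤ 1)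
    {α αstar : EuclideanSpace ℝ (S × Aa)}
    (hα : inPolicySimplex α) (hαstar : inPolicySimplex αstar) :
    Jobj P r γ ε ρ pihat ν α - Jobj P r γ ε ρ pihat ν αstar
      = ε * ∑ s, dvec P γ ε ρ pihat ν αstar s *
          ∑ a, (α (s, a) - αstar (s, a)) * Qbar P r γ ε pihat ν α s a := by
  have hdetα : IsUnit (Amat P γ ε pihat ν α).det :=
    isUnit_det_Amat hP0 hP1 hγ0 hγ1 hν hpihat0 hpihat1 hε0 hε1 hα
  have hdets : IsUnit (Amat P γ ε pihat ν αstar).det :=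
    isUnit_det_Amat hP0 hP1 hγ0 hγ1 hν hpihat0 hpihat1 hε0 hε1 hαstar
  set Vα := Vvec P r γ ε pihat ν α with hVα
  set Vs := Vvec P r γ ε pihat ν αstar with hVs
  set g : S → ℝ := fun s =>
    ε * ∑ a, (α (s, a) - αstar (s, a)) * Qbar P r γ ε pihat ν α s a with hg
  -- advantage identity
  have c0 : (Amat P γ ε pihat ν αstar)ᵀ *ᵥ (fun s => Vα s - Vs s) = g := by
    funext s
    rw [Amat_transpose_mulVec_apply]
    have hb : ∑ s', bigM P ε pihat ν αstar s' s * (Vα s' - Vs s')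
        = (∑ s', bigM P ε pihat ν αstar s' s * Vα s')
          - ∑ s', bigM P ε pihat ν αstar s' s * Vs s' := by
      rw [← Finset.sum_sub_distrib]
      exact Finset.sum_congr rfl fun s' _ => by ring
    have hbell : Vs s = rbar r ε pihat ν αstar s
        + γ * ∑ s', bigM P ε pihat ν αstar s' s * Vs s' := Vvec_bellman hdets s
    have hexp : rbar r ε pihat ν αstar s
          + γ * ∑ s', bigM P ε pihat ν αstar s' s * Vα s'
        = ∑ a, ((1 - ε) * pihat s a + ε * αstar (s, a)) * Qbar P r γ ε pihat ν α s a :=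
      expand_mix Vα s
    have hpol : Vα s
        = ∑ a, ((1 - ε) * pihat s a + ε * α (s, a)) * Qbar P r γ ε pihat ν α s a :=
      Vvec_eq_policy_Q hdetα s
    have : Vα s - Vs s - γ * ∑ s', bigM P ε pihat ν αstar s' s * (Vα s' - Vs s')
        = (∑ a, ((1 - ε) * pihat s a + ε * α (s, a)) * Qbar P r γ ε pihat ν α s a)
          - ∑ a, ((1 - ε) * pihat s a + ε * αstar (s, a)) * Qbar P r γ ε pihat ν α s a := by
      rw [hb]
      rw [← hpol, ← hexp]
      linarith [hbell]
    rw [this]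
    show _ = ε * ∑ a, (α (s, a) - αstar (s, a)) * Qbar P r γ ε pihat ν α s a
    rw [← Finset.sum_sub_distrib, Finset.mul_sum]
    exact Finset.sum_congr rfl fun a _ => by ring
  have c1 : (fun s => Vα s - Vs s) = ((Amat P γ ε pihat ν αstar)ᵀ)⁻¹ *ᵥ g := by
    rw [← c0, Matrix.mulVec_mulVec,
      Matrix.nonsing_inv_mul _ (by rwa [Matrix.det_transpose]), Matrix.one_mulVec]
  have step1 : Jobj P r γ ε ρ pihat ν α - Jobj P r γ ε ρ pihat ν αstar
      = ∑ s, ρ s * (Vα s - Vs s) := by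
    rw [Jobj_eq_rhoV hdetα, Jobj_eq_rhoV hdets, ← Finset.sum_sub_distrib]
    exact Finset.sum_congr rfl fun s _ => by ring
  rw [step1]
  have step2 : ∑ s, ρ s * (Vα s - Vs s)
      = ∑ s, ρ s * ((((Amat P γ ε pihat ν αstar)ᵀ)⁻¹ *ᵥ g) s) :=
    Finset.sum_congr rfl fun s _ => by rw [← congrFun c1 s]
  rw [step2, rho_pair_swap, Finset.mul_sum]
  refine Finset.sum_congr rfl fun s _ => ?_
  show dvec P γ ε ρ pihat ν αstar s
      * (ε * ∑ a, (α (s, a) - αstar (s, a)) * Qbar P r γ ε pihat ν α s a) = _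
  ring

end PDL

end AGDaux
namespace AGDaux

section Gradient

attribute [local instance] Matrix.linftyOpNormedRing Matrix.linftyOpNormedAlgebra

variable {S Av Aa : Type*} [Fintype S] [DecidableEq S] [Fintype Av] [Fintype Aa]

/-- The (linear) derivative of `x ↦ bigM x`. -/
noncomputable def dMlin (P : S → Av → Aa → S → ℝ) (ε : ℝ) (ν : EuclideanSpace ℝ (S × Av)) :
    EuclideanSpace ℝ (S × Aa) →ₗ[ℝ] Matrix S S ℝ where
  toFun v := Matrix.of fun s' s => ∑ av, ∑ aa, ν (s, av) * (ε * v (s, aa)) * P s av aa s'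
  map_add' v w := by
    ext s' s
    simp only [Matrix.of_apply, Matrix.add_apply, PiLp.add_apply]
    rw [← Finset.sum_add_distrib]
    refine Finset.sum_congr rfl fun av _ => ?_
    rw [← Finset.sum_add_distrib]
    refine Finset.sum_congr rfl fun aa _ => by ring
  map_smul' c v := by
    ext s' s
    simp only [Matrix.of_apply, Matrix.smul_apply, PiLp.smul_apply, smul_eq_mul,
      RingHom.id_apply]
    rw [Finset.mul_sum]
    refine Finset.sum_congr rfl fun av _ => ?_
    rw [Finset.mul_sum]
    refine Finset.sum_congr rfl fun aa _ => by ring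

/-- The (linear) derivative of `x ↦ rbar x s`. -/
noncomputable def rblin (r : S → Av → Aa → ℝ) (ε : ℝ) (ν : EuclideanSpace ℝ (S × Av))
    (s : S) : EuclideanSpace ℝ (S × Aa) →ₗ[ℝ] ℝ where
  toFun v := ∑ av, ∑ aa, ν (s, av) * (ε * v (s, aa)) * r s av aa
  map_add' v w := by
    simp only [PiLp.add_apply]
    rw [← Finset.sum_add_distrib]
    refine Finset.sum_congr rfl fun av _ => ?_
    rw [← Finset.sum_add_distrib]
    refine Finset.sum_congr rfl fun aa _ => by ring
  map_smul' c v := by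
    simp only [PiLp.smul_apply, smul_eq_mul, RingHom.id_apply]
    rw [Finset.mul_sum]
    refine Finset.sum_congr rfl fun av _ => ?_
    rw [Finset.mul_sum]
    refine Finset.sum_congr rfl fun aa _ => by ring

/-- Evaluation of the `mulVec`-coordinate as a linear map on matrices. -/
noncomputable def mvlin (ρ : S → ℝ) (s : S) : Matrix S S ℝ →ₗ[ℝ] ℝ where
  toFun A := (A *ᵥ ρ) s
  map_add' A B := by show ((A + B) *ᵥ ρ) s = _; rw [Matrix.add_mulVec]; rfl
  map_smul' c A := by show ((c • A) *ᵥ ρ) s = _; rw [Matrix.smul_mulVec]; rfl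

variable {P : S → Av → Aa → S → ℝ} {r : S → Av → Aa → ℝ} {γ ε : ℝ} {ρ : S → ℝ}
  {pihat : S → Aa → ℝ} {ν : EuclideanSpace ℝ (S × Av)} {α : EuclideanSpace ℝ (S × Aa)}

lemma hasFDerivAt_Amat :
    HasFDerivAt (fun x => Amat P γ ε pihat ν x)
      (LinearMap.toContinuousLinearMap (-(γ • dMlin P ε ν))) α := by
  set Φ := LinearMap.toContinuousLinearMap (-(γ • dMlin P ε ν)) with hΦ
  have key : (fun x : EuclideanSpace ℝ (S × Aa) => Amat P γ ε pihat ν x)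
      = fun x => (1 - γ • inducedMatrix P (fun s a => ν (s, a))
          (fun s a => (1 - ε) * pihat s a)) + Φ x := by
    funext x
    ext s' s
    have hΦx : Φ x s' s = -(γ * ∑ av, ∑ aa, ν (s, av) * (ε * x (s, aa)) * P s av aa s') := by
      simp only [hΦ, LinearMap.coe_toContinuousLinearMap', LinearMap.neg_apply,
        LinearMap.smul_apply, Matrix.neg_apply, Matrix.smul_apply, smul_eq_mul, dMlin,
        LinearMap.coe_mk, AddHom.coe_mk, Matrix.of_apply]
    rw [Matrix.add_apply, hΦx]
    simp only [Amat, bigM, inducedMatrix, Matrix.sub_apply, Matrix.smul_apply,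
      Matrix.of_apply, smul_eq_mul]
    have hsplit : ∑ av, ∑ aa, ν (s, av) * ((1 - ε) * pihat s aa + ε * x (s, aa)) * P s av aa s'
        = (∑ av, ∑ aa, ν (s, av) * ((1 - ε) * pihat s aa) * P s av aa s')
          + ∑ av, ∑ aa, ν (s, av) * (ε * x (s, aa)) * P s av aa s' := by
      rw [← Finset.sum_add_distrib]
      refine Finset.sum_congr rfl fun av _ => ?_
      rw [← Finset.sum_add_distrib]
      refine Finset.sum_congr rfl fun aa _ => by ring
    rw [hsplit]
    ring
  rw [key]
  exact Φ.hasFDerivAt.const_add _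

lemma hasFDerivAt_rbar (s : S) :
    HasFDerivAt (fun x => rbar r ε pihat ν x s)
      (LinearMap.toContinuousLinearMap (rblin r ε ν s)) α := by
  set ψ := LinearMap.toContinuousLinearMap (rblin r ε ν s) with hψ
  have key : (fun x : EuclideanSpace ℝ (S × Aa) => rbar r ε pihat ν x s)
      = fun x => (∑ av, ∑ aa, ν (s, av) * ((1 - ε) * pihat s aa) * r s av aa) + ψ x := by
    funext x
    have hψx : ψ x = ∑ av, ∑ aa, ν (s, av) * (ε * x (s, aa)) * r s av aa := rfl
    rw [hψx, rbar, marginalReward, ← Finset.sum_add_distrib]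
    refine Finset.sum_congr rfl fun av _ => ?_
    rw [← Finset.sum_add_distrib]
    refine Finset.sum_congr rfl fun aa _ => by ring
  rw [key]
  exact ψ.hasFDerivAt.const_add _

end Gradient

end AGDaux
namespace AGDaux

section Gradient2

attribute [local instance] Matrix.linftyOpNormedRing Matrix.linftyOpNormedAlgebra

variable {S Av Aa : Type*} [Fintype S] [DecidableEq S] [Fintype Av] [Fintype Aa]
variable {P : S → Av → Aa → S → ℝ} {r : S → Av → Aa → ℝ} {γ ε : ℝ} {ρ : S → ℝ}
  {pihat : S → Aa → ℝ} {ν : EuclideanSpace ℝ (S × Av)} {α : EuclideanSpace ℝ (S × Aa)}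

lemma grad_inner_raw (hdet : IsUnit (Amat P γ ε pihat ν α).det)
    (v : EuclideanSpace ℝ (S × Aa)) :
    ⟪gradient (fun x => Jobj P r γ ε ρ pihat ν x) α, v⟫
      = ∑ s, (dvec P γ ε ρ pihat ν α s * (∑ av, ∑ aa, ν (s, av) * (ε * v (s, aa)) * r s av aa)
          + rbar r ε pihat ν α s
            * (γ * ((((Amat P γ ε pihat ν α)⁻¹ * dMlin P ε ν v * (Amat P γ ε pihat ν α)⁻¹))
                *ᵥ ρ) s)) := by
  classical
  obtain ⟨U, hU⟩ := (Matrix.isUnit_iff_isUnit_det (Amat P γ ε pihat ν α)).mpr hdet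
  have hNU : (↑U⁻¹ : Matrix S S ℝ) = (Amat P γ ε pihat ν α)⁻¹ := by
    rw [Matrix.coe_units_inv, hU]
  set Φ := LinearMap.toContinuousLinearMap (-(γ • dMlin P ε ν)) with hΦ
  have hinv0 : HasFDerivAt (Ring.inverse : Matrix S S ℝ → Matrix S S ℝ)
      (-(ContinuousLinearMap.mulLeftRight ℝ (Matrix S S ℝ) ↑U⁻¹ ↑U⁻¹))
      (Amat P γ ε pihat ν α) := hU ▸ hasFDerivAt_ringInverse U
  have hinv : HasFDerivAt (fun x => Ring.inverse (Amat P γ ε pihat ν x))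
      ((-(ContinuousLinearMap.mulLeftRight ℝ (Matrix S S ℝ) ↑U⁻¹ ↑U⁻¹)).comp Φ) α :=
    hinv0.comp α hasFDerivAt_Amat
  have hcoord : ∀ s : S, HasFDerivAt
      (fun x => (Ring.inverse (Amat P γ ε pihat ν x) *ᵥ ρ) s)
      ((LinearMap.toContinuousLinearMap (mvlin ρ s)).comp
        ((-(ContinuousLinearMap.mulLeftRight ℝ (Matrix S S ℝ) ↑U⁻¹ ↑U⁻¹)).comp Φ)) α :=
    fun s => ((LinearMap.toContinuousLinearMap (mvlin ρ s)).hasFDerivAt).comp α hinv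
  have hprod : ∀ s : S, HasFDerivAt
      (fun x => (Ring.inverse (Amat P γ ε pihat ν x) *ᵥ ρ) s * rbar r ε pihat ν x s)
      ((Ring.inverse (Amat P γ ε pihat ν α) *ᵥ ρ) s
          • LinearMap.toContinuousLinearMap (rblin r ε ν s)
        + rbar r ε pihat ν α s
          • ((LinearMap.toContinuousLinearMap (mvlin ρ s)).comp
              ((-(ContinuousLinearMap.mulLeftRight ℝ (Matrix S S ℝ) ↑U⁻¹ ↑U⁻¹)).comp Φ))) α :=
    fun s => (hcoord s).mul (hasFDerivAt_rbar s)
  have hJfun : (fun x : EuclideanSpace ℝ (S × Aa) => Jobj P r γ ε ρ pihat ν x)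
      = fun x => ∑ s, (Ring.inverse (Amat P γ ε pihat ν x) *ᵥ ρ) s * rbar r ε pihat ν x s := by
    funext x
    rw [Jobj_eq]
    exact Finset.sum_congr rfl fun s _ => by
      rw [dvec, Matrix.nonsing_inv_eq_ringInverse]
  have hJ : HasFDerivAt (fun x => Jobj P r γ ε ρ pihat ν x)
      (∑ s, ((Ring.inverse (Amat P γ ε pihat ν α) *ᵥ ρ) s
          • LinearMap.toContinuousLinearMap (rblin r ε ν s)
        + rbar r ε pihat ν α s
          • ((LinearMap.toContinuousLinearMap (mvlin ρ s)).comp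
              ((-(ContinuousLinearMap.mulLeftRight ℝ (Matrix S S ℝ) ↑U⁻¹ ↑U⁻¹)).comp Φ)))) α := by
    rw [hJfun]
    exact HasFDerivAt.fun_sum fun s _ => hprod s
  have hgrad : ⟪gradient (fun x => Jobj P r γ ε ρ pihat ν x) α, v⟫
      = (∑ s, ((Ring.inverse (Amat P γ ε pihat ν α) *ᵥ ρ) s
          • LinearMap.toContinuousLinearMap (rblin r ε ν s)
        + rbar r ε pihat ν α s
          • ((LinearMap.toContinuousLinearMap (mvlin ρ s)).comp
              ((-(ContinuousLinearMap.mulLeftRight ℝ (Matrix S S ℝ) ↑U⁻¹ ↑U⁻¹)).comp Φ)))) v := by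
    rw [gradient, hJ.fderiv, InnerProductSpace.toDual_symm_apply]
  rw [hgrad]
  rw [ContinuousLinearMap.sum_apply]
  refine Finset.sum_congr rfl fun s _ => ?_
  rw [ContinuousLinearMap.add_apply, ContinuousLinearMap.smul_apply,
    ContinuousLinearMap.smul_apply]
  change _ + rbar r ε pihat ν α s • LinearMap.toContinuousLinearMap (mvlin ρ s)
    ((-(ContinuousLinearMap.mulLeftRight ℝ (Matrix S S ℝ) ↑U⁻¹ ↑U⁻¹)) (Φ v)) = _
  have hΦv : Φ v = -(γ • dMlin P ε ν v) := rfl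
  have hmid : (-(ContinuousLinearMap.mulLeftRight ℝ (Matrix S S ℝ) ↑U⁻¹ ↑U⁻¹)) (Φ v)
      = γ • ((Amat P γ ε pihat ν α)⁻¹ * dMlin P ε ν v * (Amat P γ ε pihat ν α)⁻¹) := by
    rw [ContinuousLinearMap.neg_apply, ContinuousLinearMap.mulLeftRight_apply, hΦv, hNU]
    rw [mul_neg, neg_mul, neg_neg, mul_smul_comm, smul_mul_assoc]
  rw [hmid]
  have hmv : LinearMap.toContinuousLinearMap (mvlin ρ s)
        (γ • ((Amat P γ ε pihat ν α)⁻¹ * dMlin P ε ν v * (Amat P γ ε pihat ν α)⁻¹))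
      = γ * ((((Amat P γ ε pihat ν α)⁻¹ * dMlin P ε ν v * (Amat P γ ε pihat ν α)⁻¹))
          *ᵥ ρ) s := by
    rw [LinearMap.coe_toContinuousLinearMap', LinearMap.map_smul]
    rfl
  rw [hmv]
  have hrblv : LinearMap.toContinuousLinearMap (rblin r ε ν s) v
      = ∑ av, ∑ aa, ν (s, av) * (ε * v (s, aa)) * r s av aa := rfl
  rw [hrblv]
  have hdv : (Ring.inverse (Amat P γ ε pihat ν α) *ᵥ ρ) s = dvec P γ ε ρ pihat ν α s := by
    rw [dvec, Matrix.nonsing_inv_eq_ringInverse]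
  rw [hdv, smul_eq_mul, smul_eq_mul]

end Gradient2

end AGDaux
namespace AGDaux

section Gradient3

variable {S Av Aa : Type*} [Fintype S] [DecidableEq S] [Fintype Av] [Fintype Aa]
variable {P : S → Av → Aa → S → ℝ} {r : S → Av → Aa → ℝ} {γ ε : ℝ} {ρ : S → ℝ}
  {pihat : S → Aa → ℝ} {ν : EuclideanSpace ℝ (S × Av)} {α : EuclideanSpace ℝ (S × Aa)}

/-- Policy-gradient formula: inner products with the gradient. -/
lemma grad_inner (hdet : IsUnit (Amat P γ ε pihat ν α).det)
    (v : EuclideanSpace ℝ (S × Aa)) :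
    ⟪gradient (fun x => Jobj P r γ ε ρ pihat ν x) α, v⟫
      = ε * ∑ s, dvec P γ ε ρ pihat ν α s
          * ∑ a, v (s, a) * Qbar P r γ ε pihat ν α s a := by
  classical
  rw [grad_inner_raw hdet v, Finset.sum_add_distrib]
  set N := (Amat P γ ε pihat ν α)⁻¹ with hN
  set d := dvec P γ ε ρ pihat ν α with hd
  set V := Vvec P r γ ε pihat ν α with hV
  set B := dMlin P ε ν v with hB
  -- canonical quadruple sums
  have hT1 : ∑ s, d s * (∑ av, ∑ aa, ν (s, av) * (ε * v (s, aa)) * r s av aa)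
      = ∑ s, ∑ a, ∑ av, d s * (ε * v (s, a)) * ν (s, av) * r s av a := by
    refine Finset.sum_congr rfl fun s _ => ?_
    calc d s * (∑ av, ∑ aa, ν (s, av) * (ε * v (s, aa)) * r s av aa)
        = ∑ av, ∑ aa, d s * (ν (s, av) * (ε * v (s, aa)) * r s av aa) := by
          rw [Finset.mul_sum]
          refine Finset.sum_congr rfl fun av _ => Finset.mul_sum ..
      _ = ∑ aa, ∑ av, d s * (ν (s, av) * (ε * v (s, aa)) * r s av aa) := Finset.sum_comm
      _ = ∑ a, ∑ av, d s * (ε * v (s, a)) * ν (s, av) * r s av a := by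
          refine Finset.sum_congr rfl fun a _ => Finset.sum_congr rfl fun av _ => by ring
  -- the mulVec chain
  have hw : ∀ s, ((N * B * N) *ᵥ ρ) s = (N *ᵥ (B *ᵥ d)) s := by
    intro s
    rw [← Matrix.mulVec_mulVec, ← Matrix.mulVec_mulVec]
    rfl
  have hT2 : ∑ s, rbar r ε pihat ν α s * (γ * ((N * B * N) *ᵥ ρ) s)
      = ∑ s, ∑ a, ∑ av, d s * (ε * v (s, a)) * ν (s, av)
          * (γ * ∑ j, P s av a j * V j) := by
    have e1 : ∑ s, rbar r ε pihat ν α s * (γ * ((N * B * N) *ᵥ ρ) s)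
        = γ * ∑ s, rbar r ε pihat ν α s * ((N *ᵥ (B *ᵥ d)) s) := by
      rw [Finset.mul_sum]
      refine Finset.sum_congr rfl fun s _ => ?_
      rw [hw s]
      ring
    have e2 : ∑ s, rbar r ε pihat ν α s * ((N *ᵥ (B *ᵥ d)) s)
        = ∑ j, V j * (B *ᵥ d) j := by
      have h1 : ∀ s, rbar r ε pihat ν α s * ((N *ᵥ (B *ᵥ d)) s)
          = ∑ j, rbar r ε pihat ν α s * N s j * (B *ᵥ d) j := by
        intro s
        rw [Matrix.mulVec, dotProduct, Finset.mul_sum]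
        exact Finset.sum_congr rfl fun j _ => by ring
      have h2 : ∀ j, V j * (B *ᵥ d) j
          = ∑ s, rbar r ε pihat ν α s * N s j * (B *ᵥ d) j := by
        intro j
        rw [hV, Vvec_eq_sum hdet j, Finset.sum_mul]
      rw [Finset.sum_congr rfl fun s _ => h1 s, Finset.sum_congr rfl fun j _ => h2 j,
        Finset.sum_comm]
    have e3 : ∀ j, V j * (B *ᵥ d) j
        = ∑ k, ∑ av, ∑ aa, V j * (ν (k, av) * (ε * v (k, aa)) * P k av aa j) * d k := by
      intro j
      rw [Matrix.mulVec, dotProduct, Finset.mul_sum]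
      refine Finset.sum_congr rfl fun k _ => ?_
      have hBjk : B j k = ∑ av, ∑ aa, ν (k, av) * (ε * v (k, aa)) * P k av aa j := rfl
      rw [hBjk, Finset.sum_mul, Finset.mul_sum]
      refine Finset.sum_congr rfl fun av _ => ?_
      rw [Finset.sum_mul, Finset.mul_sum]
      exact Finset.sum_congr rfl fun aa _ => by ring
    rw [e1, e2, Finset.sum_congr rfl fun j _ => e3 j]
    -- now : γ * ∑ j ∑ k ∑ av ∑ aa X = ∑ k ∑ aa ∑ av (d * (εv) * ν * (γ * ∑ j P V))
    have e4 : ∀ s a av, d s * (ε * v (s, a)) * ν (s, av) * (γ * ∑ j, P s av a j * V j)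
        = ∑ j, γ * (V j * (ν (s, av) * (ε * v (s, a)) * P s av a j) * d s) := by
      intro s a av
      rw [Finset.mul_sum, Finset.mul_sum]
      exact Finset.sum_congr rfl fun j _ => by ring
    rw [Finset.sum_congr rfl fun s _ => Finset.sum_congr rfl fun a _ =>
      Finset.sum_congr rfl fun av _ => e4 s a av]
    rw [Finset.mul_sum]
    calc ∑ j, γ * ∑ k, ∑ av, ∑ aa, V j * (ν (k, av) * (ε * v (k, aa)) * P k av aa j) * d k
        = ∑ j, ∑ k, ∑ av, ∑ aa, γ * (V j * (ν (k, av) * (ε * v (k, aa)) * P k av aa j) * d k)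
          := by
          refine Finset.sum_congr rfl fun j _ => ?_
          rw [Finset.mul_sum]
          refine Finset.sum_congr rfl fun k _ => ?_
          rw [Finset.mul_sum]
          refine Finset.sum_congr rfl fun av _ => Finset.mul_sum ..
      _ = ∑ k, ∑ j, ∑ av, ∑ aa, γ * (V j * (ν (k, av) * (ε * v (k, aa)) * P k av aa j) * d k)
          := Finset.sum_comm
      _ = ∑ k, ∑ av, ∑ j, ∑ aa, γ * (V j * (ν (k, av) * (ε * v (k, aa)) * P k av aa j) * d k)
          := Finset.sum_congr rfl fun k _ => Finset.sum_comm
      _ = ∑ k, ∑ av, ∑ aa, ∑ j, γ * (V j * (ν (k, av) * (ε * v (k, aa)) * P k av aa j) * d k)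
          := Finset.sum_congr rfl fun k _ => Finset.sum_congr rfl fun av _ => Finset.sum_comm
      _ = ∑ k, ∑ aa, ∑ av, ∑ j, γ * (V j * (ν (k, av) * (ε * v (k, aa)) * P k av aa j) * d k)
          := Finset.sum_congr rfl fun k _ => Finset.sum_comm
  -- RHS canonical form
  have hRHS : ε * ∑ s, d s * ∑ a, v (s, a) * Qbar P r γ ε pihat ν α s a
      = (∑ s, ∑ a, ∑ av, d s * (ε * v (s, a)) * ν (s, av) * r s av a)
        + ∑ s, ∑ a, ∑ av, d s * (ε * v (s, a)) * ν (s, av)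
            * (γ * ∑ j, P s av a j * V j) := by
    rw [Finset.mul_sum, ← Finset.sum_add_distrib]
    refine Finset.sum_congr rfl fun s _ => ?_
    rw [← Finset.sum_add_distrib]
    rw [Finset.mul_sum, Finset.mul_sum]
    refine Finset.sum_congr rfl fun a _ => ?_
    have hQ : Qbar P r γ ε pihat ν α s a
        = ∑ av, ν (s, av) * (r s av a + γ * ∑ j, P s av a j * V j) := rfl
    rw [hQ]
    calc ε * (d s * (v (s, a) * ∑ av, ν (s, av) * (r s av a + γ * ∑ j, P s av a j * V j)))
        = ∑ av, ε * (d s * (v (s, a) * (ν (s, av) * (r s av a + γ * ∑ j, P s av a j * V j))))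
          := by
          rw [Finset.mul_sum, Finset.mul_sum, Finset.mul_sum]
      _ = ∑ av, (d s * (ε * v (s, a)) * ν (s, av) * r s av a
            + d s * (ε * v (s, a)) * ν (s, av) * (γ * ∑ j, P s av a j * V j)) :=
          Finset.sum_congr rfl fun av _ => by ring
      _ = _ := Finset.sum_add_distrib
  rw [hT1, hT2, hRHS]

end Gradient3

end AGDaux
namespace AGDaux

section Visit

variable {S Av Aa : Type*} [Fintype S] [DecidableEq S] [Fintype Av] [Fintype Aa]
variable {P : S → Av → Aa → S → ℝ} {r : S → Av → Aa → ℝ} {γ ε : ℝ} {ρ : S → ℝ}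
  {pihat : S → Aa → ℝ} {ν : EuclideanSpace ℝ (S × Av)} {x : EuclideanSpace ℝ (S × Aa)}

lemma summable_geom_mulVec {M : Matrix S S ℝ} (h0 : ∀ i j, 0 ≤ M i j)
    (h1 : ∀ j, ∑ i, M i j = 1) (hγ0 : 0 ≤ γ) (hγ1 : γ < 1) (ρ : S → ℝ) (s : S) :
    Summable (fun t : ℕ => γ ^ t * ((M ^ t *ᵥ ρ) s)) := by
  have : ∀ t : ℕ, γ ^ t * ((M ^ t *ᵥ ρ) s) = ∑ j, γ ^ t * (M ^ t) s j * ρ j := by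
    intro t
    rw [Matrix.mulVec, dotProduct, Finset.mul_sum]
    exact Finset.sum_congr rfl fun j _ => by ring
  rw [funext this]
  exact summable_sum (fun j _ => ((summable_geom_entry h0 h1 hγ0 hγ1 s j).mul_right _))

lemma stateVisitation_eq (hP0 : ∀ s av aa s', 0 ≤ P s av aa s')
    (hP1 : ∀ s av aa, ∑ s', P s av aa s' = 1)
    (hγ0 : 0 ≤ γ) (hγ1 : γ < 1)
    (hν : inPolicySimplex ν) (hpihat0 : ∀ s a, 0 ≤ pihat s a)
    (hpihat1 : ∀ s, ∑ a, pihat s a = 1)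
    (hε0 : 0 ≤ ε) (hε1 : ε ≤ 1) (hx : inPolicySimplex x) (s : S) :
    stateVisitation P γ ρ (fun s a => ν (s, a))
        (fun s a => (1 - ε) * pihat s a + ε * x (s, a)) s
      = (1 - γ) * dvec P γ ε ρ pihat ν x s := by
  have hM0 := bigM_nonneg hP0 hν hpihat0 hε0 hε1 hx
  have hM1 := bigM_colsum (ε := ε) hP1 hν hpihat1 hx
  have hind : inducedMatrix P (fun s a => ν (s, a))
      (fun s a => (1 - ε) * pihat s a + ε * x (s, a)) = bigM P ε pihat ν x := rfl
  have hsumm : Summable (fun t : ℕ => γ ^ t • ((bigM P ε pihat ν x ^ t) *ᵥ ρ)) := by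
    rw [Pi.summable]
    intro j
    have : ∀ t : ℕ, (γ ^ t • ((bigM P ε pihat ν x ^ t) *ᵥ ρ)) j
        = γ ^ t * ((bigM P ε pihat ν x ^ t *ᵥ ρ) j) := fun t => rfl
    rw [funext this]
    exact summable_geom_mulVec hM0 hM1 hγ0 hγ1 ρ j
  rw [stateVisitation, hind, Pi.smul_apply, smul_eq_mul]
  congr 1
  rw [tsum_apply hsumm]
  have happ : ∀ t : ℕ, (γ ^ t • ((bigM P ε pihat ν x ^ t) *ᵥ ρ)) s
      = γ ^ t * ((bigM P ε pihat ν x ^ t *ᵥ ρ) s) := fun t => rfl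
  rw [tsum_congr happ]
  rw [dvec, Amat]
  exact (inv_one_sub_smul_mulVec hM0 hM1 hγ0 hγ1 ρ s).symm

lemma rho_le_dvec (hP0 : ∀ s av aa s', 0 ≤ P s av aa s')
    (hP1 : ∀ s av aa, ∑ s', P s av aa s' = 1)
    (hγ0 : 0 ≤ γ) (hγ1 : γ < 1)
    (hν : inPolicySimplex ν) (hpihat0 : ∀ s a, 0 ≤ pihat s a)
    (hpihat1 : ∀ s, ∑ a, pihat s a = 1)
    (hε0 : 0 ≤ ε) (hε1 : ε ≤ 1) (hx : inPolicySimplex x)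
    (hρ : ∀ s, 0 ≤ ρ s) (s : S) :
    ρ s ≤ dvec P γ ε ρ pihat ν x s := by
  rw [dvec, Amat]
  exact rho_le_inv_mulVec (bigM_nonneg hP0 hν hpihat0 hε0 hε1 hx)
    (bigM_colsum hP1 hν hpihat1 hx) hγ0 hγ1 hρ s

end Visit

end AGDaux

/-- gradient domination for the attacker:
`J(ν,α) - min_{α'} J(ν,α') ≤ (1/(1-γ)) · max_s (d_ρ^{π_ν, mix(α*)}(s)/ρ(s)) ·
max_{ᾱ ∈ Δ} ⟨∇_α J(ν,α), α - ᾱ⟩`, for any minimizer `α*`. -/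
theorem attacker_gradient_domination {S Av Aa : Type*}
    [Fintype S] [Nonempty S] [DecidableEq S]
    [Fintype Av] [Nonempty Av] [Fintype Aa] [Nonempty Aa]
    (P : S → Av → Aa → S → ℝ)
    (hP0 : ∀ s av aa s', 0 ≤ P s av aa s')
    (hP1 : ∀ s av aa, ∑ s', P s av aa s' = 1)
    (r : S → Av → Aa → ℝ)
    (hr0 : ∀ s av aa, 0 ≤ r s av aa) (hr1 : ∀ s av aa, r s av aa ≤ 1)
    (γ : ℝ) (hγ0 : 0 ≤ γ) (hγ1 : γ < 1)
    (ρ : S → ℝ) (hρ0 : ∀ s, 0 < ρ s) (hρ1 : ∑ s, ρ s = 1)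
    (pihat : S → Aa → ℝ)
    (hpihat0 : ∀ s a, 0 ≤ pihat s a) (hpihat1 : ∀ s, ∑ a, pihat s a = 1)
    (ε : ℝ) (hε0 : 0 ≤ ε) (hε1 : ε ≤ 1)
    (ν : EuclideanSpace ℝ (S × Av)) (α : EuclideanSpace ℝ (S × Aa))
    (hν : inPolicySimplex ν) (hα : inPolicySimplex α)
    (αstar : EuclideanSpace ℝ (S × Aa)) (hαstar : inPolicySimplex αstar)
    (hαstarMin : ∀ α' : EuclideanSpace ℝ (S × Aa), inPolicySimplex α' →
      Jobj P r γ ε ρ pihat ν αstar ≤ Jobj P r γ ε ρ pihat ν α') :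
    Jobj P r γ ε ρ pihat ν α - Jobj P r γ ε ρ pihat ν αstar ≤
      (1 / (1 - γ)) *
        (Finset.univ.sup' Finset.univ_nonempty fun s =>
          stateVisitation P γ ρ (fun s a => ν (s, a))
            (fun s a => (1 - ε) * pihat s a + ε * αstar (s, a)) s / ρ s) *
        sSup ((fun abar : EuclideanSpace ℝ (S × Aa) =>
          ⟪gradient (fun x => Jobj P r γ ε ρ pihat ν x) α, α - abar⟫) ''
            {x | inPolicySimplex x}) := by
  classical
  have hdetα : IsUnit (AGDaux.Amat P γ ε pihat ν α).det :=
    AGDaux.isUnit_det_Amat hP0 hP1 hγ0 hγ1 hν hpihat0 hpihat1 hε0 hε1 hα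
  set Q : S → Aa → ℝ := AGDaux.Qbar P r γ ε pihat ν α with hQdef
  set ds : S → ℝ := AGDaux.dvec P γ ε ρ pihat ν αstar with hdsdef
  set dα : S → ℝ := AGDaux.dvec P γ ε ρ pihat ν α with hdαdef
  set g : EuclideanSpace ℝ (S × Aa) :=
    gradient (fun x => Jobj P r γ ε ρ pihat ν x) α with hgdef
  -- positivity of visitation vectors
  have hds_pos : ∀ s, 0 < ds s := fun s =>
    lt_of_lt_of_le (hρ0 s) (AGDaux.rho_le_dvec hP0 hP1 hγ0 hγ1 hν hpihat0 hpihat1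
      hε0 hε1 hαstar (fun s => (hρ0 s).le) s)
  have hdα_ge : ∀ s, ρ s ≤ dα s := fun s =>
    AGDaux.rho_le_dvec hP0 hP1 hγ0 hγ1 hν hpihat0 hpihat1 hε0 hε1 hα
      (fun s => (hρ0 s).le) s
  -- greedy policy
  have hmin : ∀ s : S, ∃ a : Aa, ∀ a', Q s a ≤ Q s a' := by
    intro s
    obtain ⟨a, -, ha⟩ := Finset.exists_min_image Finset.univ (Q s)
      ⟨Classical.arbitrary Aa, Finset.mem_univ _⟩
    exact ⟨a, fun a' => ha a' (Finset.mem_univ _)⟩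
  choose a0 ha0 using hmin
  set abar : EuclideanSpace ℝ (S × Aa) :=
    WithLp.toLp 2 (fun p : S × Aa => if p.2 = a0 p.1 then (1:ℝ) else 0) with habardef
  have habar : inPolicySimplex abar := by
    constructor
    · intro p
      show (0:ℝ) ≤ if p.2 = a0 p.1 then (1:ℝ) else 0
      split <;> norm_num
    · intro s
      show ∑ a, (if a = a0 s then (1:ℝ) else 0) = 1
      rw [Finset.sum_ite_eq' Finset.univ (a0 s) (fun _ => (1:ℝ))]
      simp
  have habar_sum : ∀ s, ∑ a, abar (s, a) * Q s a = Q s (a0 s) := by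
    intro s
    have h : ∀ a, abar (s, a) * Q s a = if a = a0 s then Q s a else 0 := by
      intro a
      show (if a = a0 s then (1:ℝ) else 0) * Q s a = if a = a0 s then Q s a else 0
      split <;> simp
    rw [Finset.sum_congr rfl fun a _ => h a,
      Finset.sum_ite_eq' Finset.univ (a0 s) (fun a => Q s a)]
    simp
  have hgreedy : ∀ s (p : Aa → ℝ), (∀ a, 0 ≤ p a) → (∑ a, p a = 1) →
      ∑ a, abar (s, a) * Q s a ≤ ∑ a, p a * Q s a := by
    intro s p hp0 hp1
    rw [habar_sum s]
    calc Q s (a0 s) = ∑ a, p a * Q s (a0 s) := by rw [← Finset.sum_mul, hp1, one_mul]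
      _ ≤ ∑ a, p a * Q s a :=
        Finset.sum_le_sum fun a _ => mul_le_mul_of_nonneg_left (ha0 s a) (hp0 a)
  -- inner product with gradient for any v
  have hginner : ∀ v : EuclideanSpace ℝ (S × Aa),
      ⟪g, v⟫ = ε * ∑ s, dα s * ∑ a, v (s, a) * Q s a :=
    fun v => AGDaux.grad_inner hdetα v
  -- the key quantity X
  set X : ℝ := ⟪g, α - abar⟫ with hXdef
  have hXeval : X = ε * ∑ s, dα s * ∑ a, (α (s, a) - abar (s, a)) * Q s a := by
    rw [hXdef, hginner (α - abar)]
    simp only [PiLp.sub_apply]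
  -- per-state inequalities
  have hts_nonneg : ∀ s, 0 ≤ ∑ a, (α (s, a) - abar (s, a)) * Q s a := by
    intro s
    have h1 : ∑ a, abar (s, a) * Q s a ≤ ∑ a, α (s, a) * Q s a :=
      hgreedy s (fun a => α (s, a)) (fun a => hα.1 _) (hα.2 s)
    have h2 : ∑ a, (α (s, a) - abar (s, a)) * Q s a
        = ∑ a, α (s, a) * Q s a - ∑ a, abar (s, a) * Q s a := by
      rw [← Finset.sum_sub_distrib]
      exact Finset.sum_congr rfl fun a _ => by ring
    linarith [h1, h2.ge, h2.le]
  have hts_dom : ∀ s, ∑ a, (α (s, a) - αstar (s, a)) * Q s a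
      ≤ ∑ a, (α (s, a) - abar (s, a)) * Q s a := by
    intro s
    have h1 : ∑ a, abar (s, a) * Q s a ≤ ∑ a, αstar (s, a) * Q s a :=
      hgreedy s (fun a => αstar (s, a)) (fun a => hαstar.1 _) (hαstar.2 s)
    have h2 : ∑ a, (α (s, a) - αstar (s, a)) * Q s a
        = ∑ a, α (s, a) * Q s a - ∑ a, αstar (s, a) * Q s a := by
      rw [← Finset.sum_sub_distrib]
      exact Finset.sum_congr rfl fun a _ => by ring
    have h3 : ∑ a, (α (s, a) - abar (s, a)) * Q s a
        = ∑ a, α (s, a) * Q s a - ∑ a, abar (s, a) * Q s a := by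
      rw [← Finset.sum_sub_distrib]
      exact Finset.sum_congr rfl fun a _ => by ring
    linarith
  -- mismatch coefficient
  set C : ℝ := Finset.univ.sup' Finset.univ_nonempty (fun s => ds s / ρ s) with hCdef
  have hC_ge : ∀ s, ds s / ρ s ≤ C := fun s =>
    Finset.le_sup' (f := fun s => ds s / ρ s) (Finset.mem_univ s)
  have hC_pos : 0 < C := by
    obtain ⟨s⟩ := ‹Nonempty S›
    exact lt_of_lt_of_le (div_pos (hds_pos s) (hρ0 s)) (hC_ge s)
  have hds_le : ∀ s, ds s ≤ C * ρ s := by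
    intro s
    rw [← div_le_iff₀ (hρ0 s)] at *
    exact hC_ge s
  -- PDL and the chain of inequalities
  have hpdl : Jobj P r γ ε ρ pihat ν α - Jobj P r γ ε ρ pihat ν αstar
      = ε * ∑ s, ds s * ∑ a, (α (s, a) - αstar (s, a)) * Q s a :=
    AGDaux.pdl hP0 hP1 hγ0 hγ1 hν hpihat0 hpihat1 hε0 hε1 hα hαstar
  have hchain : Jobj P r γ ε ρ pihat ν α - Jobj P r γ ε ρ pihat ν αstar ≤ C * X := by
    rw [hpdl, hXeval]
    have step1 : ∑ s, ds s * ∑ a, (α (s, a) - αstar (s, a)) * Q s a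
        ≤ ∑ s, ds s * ∑ a, (α (s, a) - abar (s, a)) * Q s a :=
      Finset.sum_le_sum fun s _ =>
        mul_le_mul_of_nonneg_left (hts_dom s) (hds_pos s).le
    have step2 : ∑ s, ds s * ∑ a, (α (s, a) - abar (s, a)) * Q s a
        ≤ ∑ s, (C * dα s) * ∑ a, (α (s, a) - abar (s, a)) * Q s a := by
      refine Finset.sum_le_sum fun s _ => mul_le_mul_of_nonneg_right ?_ (hts_nonneg s)
      calc ds s ≤ C * ρ s := hds_le s
        _ ≤ C * dα s := mul_le_mul_of_nonneg_left (hdα_ge s) hC_pos.le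
    have step3 : ∑ s, (C * dα s) * ∑ a, (α (s, a) - abar (s, a)) * Q s a
        = C * ∑ s, dα s * ∑ a, (α (s, a) - abar (s, a)) * Q s a := by
      rw [Finset.mul_sum]
      exact Finset.sum_congr rfl fun s _ => by ring
    calc ε * ∑ s, ds s * ∑ a, (α (s, a) - αstar (s, a)) * Q s a
        ≤ ε * ∑ s, (C * dα s) * ∑ a, (α (s, a) - abar (s, a)) * Q s a :=
          mul_le_mul_of_nonneg_left (le_trans step1 step2) hε0
      _ = C * (ε * ∑ s, dα s * ∑ a, (α (s, a) - abar (s, a)) * Q s a) := by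
          rw [step3]; ring
  -- the sup term equals (1-γ) * C / (1-γ) stuff
  have hsup_eq : (Finset.univ.sup' Finset.univ_nonempty fun s =>
        stateVisitation P γ ρ (fun s a => ν (s, a))
          (fun s a => (1 - ε) * pihat s a + ε * αstar (s, a)) s / ρ s)
      = (1 - γ) * C := by
    have h1 : (fun s => stateVisitation P γ ρ (fun s a => ν (s, a))
          (fun s a => (1 - ε) * pihat s a + ε * αstar (s, a)) s / ρ s)
        = fun s => (1 - γ) * (ds s / ρ s) := by
      funext s
      rw [AGDaux.stateVisitation_eq hP0 hP1 hγ0 hγ1 hν hpihat0 hpihat1 hε0 hε1 hαstar s,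
        mul_div_assoc]
    rw [h1, hCdef]
    exact (Finset.comp_sup'_eq_sup'_comp Finset.univ_nonempty
      (fun y : ℝ => (1 - γ) * y) (fun a b => mul_max_of_nonneg a b (by linarith))).symm
  -- bounding X by the sSup
  have hbdd : BddAbove ((fun abar : EuclideanSpace ℝ (S × Aa) =>
      ⟪g, α - abar⟫) '' {x | inPolicySimplex x}) := by
    refine ⟨‖g‖ * (‖α‖ + (Fintype.card S : ℝ)), ?_⟩
    rintro y ⟨ab, hab, rfl⟩
    have hnormab : ‖ab‖ ≤ (Fintype.card S : ℝ) := by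
      have hsq : ∑ p : S × Aa, ab p ^ 2 ≤ (∑ p : S × Aa, ab p) ^ 2 :=
        Finset.sum_sq_le_sq_sum_of_nonneg fun p _ => hab.1 p
      have hsum : ∑ p : S × Aa, ab p = (Fintype.card S : ℝ) := by
        rw [Fintype.sum_prod_type]
        rw [Finset.sum_congr rfl fun s (_ : s ∈ Finset.univ) => hab.2 s]
        simp
      have hnorm : ‖ab‖ = Real.sqrt (∑ p : S × Aa, ab p ^ 2) := by
        rw [EuclideanSpace.norm_eq]
        congr 1
        exact Finset.sum_congr rfl fun p _ => by
          rw [Real.norm_eq_abs, sq_abs]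
      rw [hnorm]
      calc Real.sqrt (∑ p : S × Aa, ab p ^ 2) ≤ Real.sqrt ((∑ p : S × Aa, ab p) ^ 2) :=
            Real.sqrt_le_sqrt hsq
        _ = |∑ p : S × Aa, ab p| := Real.sqrt_sq_eq_abs _
        _ = (Fintype.card S : ℝ) := by rw [hsum]; exact abs_of_nonneg (by positivity)
    calc ⟪g, α - ab⟫ ≤ ‖g‖ * ‖α - ab‖ := real_inner_le_norm g (α - ab)
      _ ≤ ‖g‖ * (‖α‖ + ‖ab‖) :=
          mul_le_mul_of_nonneg_left (norm_sub_le α ab) (norm_nonneg g)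
      _ ≤ ‖g‖ * (‖α‖ + (Fintype.card S : ℝ)) := by
          refine mul_le_mul_of_nonneg_left ?_ (norm_nonneg g)
          linarith [hnormab]
  have hXle : X ≤ sSup ((fun abar : EuclideanSpace ℝ (S × Aa) =>
      ⟪g, α - abar⟫) '' {x | inPolicySimplex x}) :=
    le_csSup hbdd ⟨abar, habar, rfl⟩
  -- final computation
  have hfinal : (1 / (1 - γ)) * ((1 - γ) * C) = C := by
    have hne : (1:ℝ) - γ ≠ 0 := by linarith
    rw [← mul_assoc, one_div_mul_cancel hne, one_mul]
  calc Jobj P r γ ε ρ pihat ν α - Jobj P r γ ε ρ pihat ν αstar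
      ≤ C * X := hchain
    _ ≤ C * sSup ((fun abar : EuclideanSpace ℝ (S × Aa) =>
          ⟪g, α - abar⟫) '' {x | inPolicySimplex x}) :=
        mul_le_mul_of_nonneg_left hXle hC_pos.le
    _ = (1 / (1 - γ)) *
          (Finset.univ.sup' Finset.univ_nonempty fun s =>
            stateVisitation P γ ρ (fun s a => ν (s, a))
              (fun s a => (1 - ε) * pihat s a + ε * αstar (s, a)) s / ρ s) *
          sSup ((fun abar : EuclideanSpace ℝ (S × Aa) =>
            ⟪g, α - abar⟫) '' {x | inPolicySimplex x}) := by
        rw [hsup_eq, hfinal]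
end

section
/- (Lemma: gradient domination for the victim.) In a finite two-player Markov game with discount γ ∈ [0,1), reward r : S × A_ν × A_α → [0,1], initial distribution ρ with ρ(s) > 0 for all s, benign attacker policy π̂_α, and ε_π ∈ [0,1]: for any (ν, α) in the product of simplices Δ(A_ν)^{|S|} × Δ(A_α)^{|S|} and any ν* ∈ Δ(A_ν)^{|S|} maximizing ν' ↦ J_{ε_π}(ν', α) over Δ(A_ν)^{|S|}, one has max_{ν' ∈ Δ(A_ν)^{|S|}} J_{ε_π}(ν', α) - J_{ε_π}(ν, α) ≤ (1/(1-γ)) · max_{s ∈ S} (d_ρ^{π_{ν*}, (1-ε_π)π̂_α + ε_π π_α}(s) / ρ(s)) · max_{ν̄ ∈ Δ(A_ν)^{|S|}} ⟨∇_ν J_{ε_π}(ν, α), ν̄ - ν⟩. -/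
open scoped BigOperators RealInnerProductSpace
open Matrix

namespace VGD
set_option linter.unusedSectionVars false
set_option linter.unusedVariables false
attribute [local instance] Matrix.linftyOpNormedAddCommGroup Matrix.linftyOpNormedSpace
  Matrix.linftyOpNormedRing Matrix.linftyOpNormedAlgebra

open scoped NNReal

variable {S : Type*} [Fintype S] [DecidableEq S]

lemma norm_lt_one (M : Matrix S S ℝ) (hM0 : ∀ s' s, 0 ≤ M s' s)
    (hM1 : ∀ s, ∑ s', M s' s = 1) {γ : ℝ} (hγ0 : 0 ≤ γ) (hγ1 : γ < 1) :
    ‖γ • Mᵀ‖ < 1 := by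
  have hMT : ‖Mᵀ‖ ≤ 1 := by
    rw [Matrix.linfty_opNorm_def]
    have : ∀ i : S, (∑ j, ‖Mᵀ i j‖₊ : ℝ≥0) ≤ 1 := by
      intro i
      have : ((∑ j, ‖Mᵀ i j‖₊ : ℝ≥0) : ℝ) = 1 := by
        push_cast
        simp only [Matrix.transpose_apply, coe_nnnorm, Real.norm_eq_abs]
        rw [← hM1 i]
        exact Finset.sum_congr rfl fun j _ => abs_of_nonneg (hM0 j i)
      exact le_of_eq (by exact_mod_cast this)
    calc ((Finset.univ.sup fun i : S => ∑ j, ‖Mᵀ i j‖₊ : ℝ≥0) : ℝ)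
        ≤ ((1 : ℝ≥0) : ℝ) := by exact_mod_cast Finset.sup_le fun b _ => this b
      _ = 1 := by norm_num
  calc ‖γ • Mᵀ‖ = |γ| * ‖Mᵀ‖ := by rw [norm_smul, Real.norm_eq_abs]
    _ ≤ γ * 1 := by
        rw [abs_of_nonneg hγ0]; exact mul_le_mul_of_nonneg_left hMT hγ0
    _ < 1 := by linarith

lemma isUnit_one_sub (M : Matrix S S ℝ) (hM0 : ∀ s' s, 0 ≤ M s' s)
    (hM1 : ∀ s, ∑ s', M s' s = 1) {γ : ℝ} (hγ0 : 0 ≤ γ) (hγ1 : γ < 1) :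
    IsUnit (1 - γ • M) := by
  have h := isUnit_one_sub_of_norm_lt_one (norm_lt_one M hM0 hM1 hγ0 hγ1)
  rw [Matrix.isUnit_iff_isUnit_det] at h ⊢
  have : (1 - γ • Mᵀ) = (1 - γ • M)ᵀ := by
    rw [Matrix.transpose_sub, Matrix.transpose_one, Matrix.transpose_smul]
  rw [this, Matrix.det_transpose] at h
  exact h


/-- transpose as a linear map (to get continuity w.r.t. local norm instances) -/
noncomputable def transposeL : Matrix S S ℝ →L[ℝ] Matrix S S ℝ :=
  LinearMap.toContinuousLinearMap
    { toFun := fun A => Aᵀ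
      map_add' := fun A B => Matrix.transpose_add A B
      map_smul' := fun c A => Matrix.transpose_smul c A }

lemma hasSum_geom (M : Matrix S S ℝ) (hM0 : ∀ s' s, 0 ≤ M s' s)
    (hM1 : ∀ s, ∑ s', M s' s = 1) {γ : ℝ} (hγ0 : 0 ≤ γ) (hγ1 : γ < 1) :
    HasSum (fun t : ℕ => (γ • M) ^ t) (Ring.inverse (1 - γ • M)) := by
  have h := hasSum_geom_series_inverse (γ • Mᵀ) (norm_lt_one M hM0 hM1 hγ0 hγ1)
  have h2 := (transposeL (S := S)).hasSum h
  have e1 : ∀ t : ℕ, transposeL ((γ • Mᵀ) ^ t) = (γ • M) ^ t := by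
    intro t
    show ((γ • Mᵀ) ^ t)ᵀ = (γ • M) ^ t
    rw [← Matrix.transpose_smul, Matrix.transpose_pow, Matrix.transpose_transpose]
  have e2 : transposeL (Ring.inverse (1 - γ • Mᵀ)) = Ring.inverse (1 - γ • M) := by
    show (Ring.inverse (1 - γ • Mᵀ))ᵀ = Ring.inverse (1 - γ • M)
    rw [← Matrix.nonsing_inv_eq_ringInverse, ← Matrix.nonsing_inv_eq_ringInverse,
      Matrix.transpose_nonsing_inv, Matrix.transpose_sub, Matrix.transpose_one,
      Matrix.transpose_smul, Matrix.transpose_transpose]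
  rw [e2] at h2
  simpa only [e1] using h2

/-- `N ↦ N *ᵥ ρ` as a continuous linear map. -/
noncomputable def mulVecL (ρ : S → ℝ) : Matrix S S ℝ →L[ℝ] (S → ℝ) :=
  LinearMap.toContinuousLinearMap
    { toFun := fun N => N *ᵥ ρ
      map_add' := fun A B => Matrix.add_mulVec A B ρ
      map_smul' := fun c A => Matrix.smul_mulVec c A ρ }

lemma hasSum_geom_mulVec (M : Matrix S S ℝ) (hM0 : ∀ s' s, 0 ≤ M s' s)
    (hM1 : ∀ s, ∑ s', M s' s = 1) {γ : ℝ} (hγ0 : 0 ≤ γ) (hγ1 : γ < 1) (ρ : S → ℝ) :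
    HasSum (fun t : ℕ => γ ^ t • (M ^ t *ᵥ ρ)) (Ring.inverse (1 - γ • M) *ᵥ ρ) := by
  have h := (mulVecL ρ).hasSum (hasSum_geom M hM0 hM1 hγ0 hγ1)
  have e1 : ∀ t : ℕ, mulVecL ρ ((γ • M) ^ t) = γ ^ t • (M ^ t *ᵥ ρ) := by
    intro t
    show (γ • M) ^ t *ᵥ ρ = γ ^ t • (M ^ t *ᵥ ρ)
    rw [smul_pow, Matrix.smul_mulVec]
  simp only [e1] at h
  exact h

lemma pow_entry_nonneg (M : Matrix S S ℝ) (hM0 : ∀ s' s, 0 ≤ M s' s) (t : ℕ) :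
    ∀ s' s, 0 ≤ (M ^ t) s' s := by
  induction t with
  | zero => intro s' s; simp [Matrix.one_apply]; positivity
  | succ t ih =>
    intro s' s
    rw [pow_succ, Matrix.mul_apply]
    exact Finset.sum_nonneg fun j _ => mul_nonneg (ih s' j) (hM0 j s)

lemma inv_mulVec_le (M : Matrix S S ℝ) (hM0 : ∀ s' s, 0 ≤ M s' s)
    (hM1 : ∀ s, ∑ s', M s' s = 1) {γ : ℝ} (hγ0 : 0 ≤ γ) (hγ1 : γ < 1)
    (ρ : S → ℝ) (hρ : ∀ s, 0 ≤ ρ s) (s : S) :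
    ρ s ≤ (Ring.inverse (1 - γ • M) *ᵥ ρ) s := by
  have h := Pi.hasSum.1 (hasSum_geom_mulVec M hM0 hM1 hγ0 hγ1 ρ) s
  have h0 := le_hasSum h 0 (fun j _ => by
    have : 0 ≤ (M ^ j *ᵥ ρ) s :=
      Finset.sum_nonneg fun k _ => mul_nonneg (pow_entry_nonneg M hM0 j s k) (hρ k)
    simpa using smul_nonneg (pow_nonneg hγ0 j) this)
  simpa using h0

lemma inv_mulVec_nonneg (M : Matrix S S ℝ) (hM0 : ∀ s' s, 0 ≤ M s' s)
    (hM1 : ∀ s, ∑ s', M s' s = 1) {γ : ℝ} (hγ0 : 0 ≤ γ) (hγ1 : γ < 1)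
    (ρ : S → ℝ) (hρ : ∀ s, 0 ≤ ρ s) (s : S) :
    0 ≤ (Ring.inverse (1 - γ • M) *ᵥ ρ) s :=
  le_trans (hρ s) (inv_mulVec_le M hM0 hM1 hγ0 hγ1 ρ hρ s)


variable {S Av : Type*} [Fintype S] [DecidableEq S] [Fintype Av]

/-- policy parameter ↦ induced matrix, as a linear map -/
noncomputable def Mlin (K : S → Av → S → ℝ) :
    EuclideanSpace ℝ (S × Av) →ₗ[ℝ] Matrix S S ℝ where
  toFun x := Matrix.of fun s' s => ∑ a, x (s, a) * K s a s'
  map_add' x y := by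
    ext s' s
    simp only [Matrix.of_apply, PiLp.add_apply, Matrix.add_apply, add_mul]
    rw [Finset.sum_add_distrib]
  map_smul' c x := by
    ext s' s
    simp only [Matrix.of_apply, PiLp.smul_apply, smul_eq_mul, RingHom.id_apply,
      Matrix.smul_apply, Finset.mul_sum, mul_assoc]

noncomputable def cfun (q : S → Av → ℝ) (x : EuclideanSpace ℝ (S × Av)) (s : S) : ℝ :=
  ∑ a, x (s, a) * q s a

/-- `cfun` as a continuous linear map, per state. -/
noncomputable def clin (q : S → Av → ℝ) (s : S) : EuclideanSpace ℝ (S × Av) →L[ℝ] ℝ :=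
  LinearMap.toContinuousLinearMap
    { toFun := fun x => cfun q x s
      map_add' := fun x y => by
        simp only [cfun, PiLp.add_apply, add_mul]; rw [Finset.sum_add_distrib]
      map_smul' := fun c x => by
        simp only [cfun, PiLp.smul_apply, smul_eq_mul, RingHom.id_apply, Finset.mul_sum,
          mul_assoc] }

noncomputable def Amat (K : S → Av → S → ℝ) (γ : ℝ) (x : EuclideanSpace ℝ (S × Av)) :
    Matrix S S ℝ := 1 - γ • Mlin K x

noncomputable def uVec (K : S → Av → S → ℝ) (γ : ℝ) (ρ : S → ℝ)
    (x : EuclideanSpace ℝ (S × Av)) : S → ℝ := (Amat K γ x)⁻¹ *ᵥ ρ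

noncomputable def vVec (K : S → Av → S → ℝ) (q : S → Av → ℝ) (γ : ℝ)
    (x : EuclideanSpace ℝ (S × Av)) : S → ℝ := (cfun q x) ᵥ* (Amat K γ x)⁻¹

noncomputable def Qf (K : S → Av → S → ℝ) (q : S → Av → ℝ) (γ : ℝ)
    (x : EuclideanSpace ℝ (S × Av)) (s : S) (a : Av) : ℝ :=
  q s a + γ * ∑ s', K s a s' * vVec K q γ x s'

noncomputable def Jfun (K : S → Av → S → ℝ) (q : S → Av → ℝ) (γ : ℝ) (ρ : S → ℝ)
    (x : EuclideanSpace ℝ (S × Av)) : ℝ :=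
  ∑ s, uVec K γ ρ x s * cfun q x s

noncomputable def gradVec (K : S → Av → S → ℝ) (q : S → Av → ℝ) (γ : ℝ) (ρ : S → ℝ)
    (x : EuclideanSpace ℝ (S × Av)) : EuclideanSpace ℝ (S × Av) :=
  WithLp.toLp 2 (fun p : S × Av => uVec K γ ρ x p.1 * Qf K q γ x p.1 p.2)

lemma hasGradientAt_Jfun (K : S → Av → S → ℝ) (q : S → Av → ℝ) (γ : ℝ) (ρ : S → ℝ)
    (x : EuclideanSpace ℝ (S × Av)) (hunit : IsUnit (Amat K γ x)) :
    HasGradientAt (Jfun K q γ ρ) (gradVec K q γ ρ x) x := by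
  classical
  set B : Matrix S S ℝ := (Amat K γ x)⁻¹ with hB
  have hBinv : Ring.inverse (Amat K γ x) = B := (Matrix.nonsing_inv_eq_ringInverse _).symm
  set un : (Matrix S S ℝ)ˣ := hunit.unit with hun
  have hunval : (un : Matrix S S ℝ) = Amat K γ x := hunit.unit_spec
  have huninv : ((un⁻¹ : (Matrix S S ℝ)ˣ) : Matrix S S ℝ) = B := by
    rw [← hBinv, ← hunval, Ring.inverse_unit]
  -- the derivative of y ↦ Amat y
  have hAff : HasFDerivAt (fun y => Amat K γ y)
      ((0 : EuclideanSpace ℝ (S × Av) →L[ℝ] Matrix S S ℝ) -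
        γ • (Mlin K (S := S) (Av := Av)).toContinuousLinearMap) x := by
    exact (hasFDerivAt_const (1 : Matrix S S ℝ) x).sub
      (((Mlin K).toContinuousLinearMap.hasFDerivAt).const_smul γ)
  -- derivative of y ↦ Ring.inverse (Amat y)
  have hinv : HasFDerivAt (fun y => Ring.inverse (Amat K γ y))
      ((-(ContinuousLinearMap.mulLeftRight ℝ (Matrix S S ℝ) B B)).comp
        ((0 : EuclideanSpace ℝ (S × Av) →L[ℝ] Matrix S S ℝ) -
          γ • (Mlin K (S := S) (Av := Av)).toContinuousLinearMap)) x := by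
    have h := (hasFDerivAt_ringInverse (𝕜 := ℝ) un)
    rw [huninv, hunval] at h
    exact h.comp x hAff
  -- derivative of each summand
  have hsum : HasFDerivAt (Jfun K q γ ρ)
      (∑ s, (uVec K γ ρ x s •
          (clin q s) +
        cfun q x s •
          (((ContinuousLinearMap.proj (R := ℝ) (φ := fun _ : S => ℝ) s).comp
            (mulVecL ρ)).comp
            ((-(ContinuousLinearMap.mulLeftRight ℝ (Matrix S S ℝ) B B)).comp
              ((0 : EuclideanSpace ℝ (S × Av) →L[ℝ] Matrix S S ℝ) -
                γ • (Mlin K (S := S) (Av := Av)).toContinuousLinearMap))))) x := by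
    have hu : ∀ s : S, HasFDerivAt (fun y => (Ring.inverse (Amat K γ y) *ᵥ ρ) s)
        ((((ContinuousLinearMap.proj (R := ℝ) (φ := fun _ : S => ℝ) s).comp
            (mulVecL ρ)).comp
            ((-(ContinuousLinearMap.mulLeftRight ℝ (Matrix S S ℝ) B B)).comp
              ((0 : EuclideanSpace ℝ (S × Av) →L[ℝ] Matrix S S ℝ) -
                γ • (Mlin K (S := S) (Av := Av)).toContinuousLinearMap)))) x := by
      intro s
      exact (((ContinuousLinearMap.proj (R := ℝ) (φ := fun _ : S => ℝ) s).comp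
        (mulVecL ρ)).hasFDerivAt).comp x hinv
    have hc : ∀ s : S, HasFDerivAt (fun y => cfun q y s) (clin q s) x := fun s =>
      (clin q s).hasFDerivAt
    have h := HasFDerivAt.sum (u := (Finset.univ : Finset S))
      (fun s _ => ((hu s).mul (hc s)))
    have : Jfun K q γ ρ = fun y => ∑ s, (Ring.inverse (Amat K γ y) *ᵥ ρ) s * cfun q y s := by
      funext y
      simp only [Jfun, uVec, Matrix.nonsing_inv_eq_ringInverse]
    rw [this]
    simp only [uVec, Matrix.nonsing_inv_eq_ringInverse] at h ⊢
    refine h.congr_of_eventuallyEq (Filter.Eventually.of_forall fun y => ?_)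
    simp [Finset.sum_apply]
  rw [hasGradientAt_iff_hasFDerivAt]
  refine hsum.congr_fderiv ?_
  symm
  refine ContinuousLinearMap.coe_injective ((PiLp.basisFun 2 ℝ (S × Av)).ext fun p0 => ?_)
  obtain ⟨s0, a0⟩ := p0
  simp only [PiLp.basisFun_apply, ContinuousLinearMap.coe_coe]
  set e : EuclideanSpace ℝ (S × Av) := PiLp.single 2 (s0, a0) 1 with he
  have hecoord : ∀ p : S × Av, e p = if p = (s0, a0) then 1 else 0 := by
    intro p; rw [he]; simp [PiLp.single_apply]
  -- LHS: inner product with basis vector collapses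
  rw [InnerProductSpace.toDual_apply_apply]
  have hL : ⟪gradVec K q γ ρ x, e⟫ = uVec K γ ρ x s0 * Qf K q γ x s0 a0 := by
    rw [PiLp.inner_apply]
    simp only [RCLike.inner_apply, starRingEnd_apply, star_trivial, hecoord, mul_ite, mul_one,
      mul_zero, Finset.sum_ite_eq', Finset.mem_univ, if_true]
    simp [ite_mul, Finset.sum_ite_eq', gradVec]
  rw [hL]
  -- compute the induced matrix of the basis vector
  have hMe : (Mlin K) e = Matrix.of fun s' s => if s = s0 then K s0 a0 s' else 0 := by
    ext s' s
    show (∑ a, e (s, a) * K s a s') = _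
    simp only [hecoord, Prod.mk.injEq, ite_mul, one_mul, zero_mul, Matrix.of_apply]
    by_cases hs : s = s0
    · subst hs
      simp only [true_and]
      simp [Finset.sum_ite_eq']
    · simp [hs]
  have hMeu : (Mlin K) e *ᵥ (uVec K γ ρ x) = fun s' => K s0 a0 s' * uVec K γ ρ x s0 := by
    funext s'
    rw [hMe]
    show (∑ s, (if s = s0 then K s0 a0 s' else 0) * uVec K γ ρ x s) = _
    simp [ite_mul, Finset.sum_ite_eq']
  have hce : ∀ s : S, (clin q s) e = if s = s0 then q s0 a0 else 0 := by
    intro s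
    show cfun q e s = _
    unfold cfun
    simp only [hecoord, Prod.mk.injEq, ite_mul, one_mul, zero_mul]
    by_cases hs : s = s0
    · subst hs
      simp only [true_and]
      simp [Finset.sum_ite_eq']
    · simp [hs]
  -- evaluate the RHS
  simp only [ContinuousLinearMap.sum_apply, ContinuousLinearMap.add_apply,
    ContinuousLinearMap.smul_apply, ContinuousLinearMap.coe_comp', Function.comp_apply,
    ContinuousLinearMap.neg_apply, ContinuousLinearMap.sub_apply, ContinuousLinearMap.zero_apply,
    ContinuousLinearMap.mulLeftRight_apply, ContinuousLinearMap.proj_apply, smul_eq_mul,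
    LinearMap.coe_toContinuousLinearMap', hce]
  have hcomp : ∀ s : S, (((ContinuousLinearMap.proj (R := ℝ) (φ := fun _ : S => ℝ) s).comp
            (mulVecL ρ)).comp
            ((-(ContinuousLinearMap.mulLeftRight ℝ (Matrix S S ℝ) B B)).comp
              ((0 : EuclideanSpace ℝ (S × Av) →L[ℝ] Matrix S S ℝ) -
                γ • (Mlin K (S := S) (Av := Av)).toContinuousLinearMap))) e
        = (mulVecL ρ) (-(B * (0 - γ • (Mlin K) e) * B)) s := fun s => rfl
  simp only [hcomp]
  have hmat : -(B * (0 - γ • (Mlin K) e) * B) = γ • (B * ((Mlin K) e * B)) := by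
    rw [zero_sub, Matrix.mul_neg, Matrix.neg_mul, neg_neg, Matrix.mul_smul, Matrix.smul_mul,
      Matrix.mul_assoc]
  rw [hmat]
  have hmv : ∀ s : S, (mulVecL ρ) (γ • (B * ((Mlin K) e * B))) s
      = γ * (uVec K γ ρ x s0 * ∑ s', B s s' * K s0 a0 s') := by
    intro s
    show ((γ • (B * ((Mlin K) e * B))) *ᵥ ρ) s = _
    rw [Matrix.smul_mulVec, ← Matrix.mulVec_mulVec, ← Matrix.mulVec_mulVec]
    have : B *ᵥ ρ = uVec K γ ρ x := rfl
    rw [this, hMeu]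
    simp only [Pi.smul_apply, smul_eq_mul]
    congr 1
    show (∑ s', B s s' * (K s0 a0 s' * uVec K γ ρ x s0)) = _
    rw [Finset.mul_sum]
    exact Finset.sum_congr rfl fun s' _ => by ring
  simp only [hmv]
  -- final algebra
  rw [Finset.sum_add_distrib]
  have h1 : (∑ s, uVec K γ ρ x s * (if s = s0 then q s0 a0 else 0))
      = uVec K γ ρ x s0 * q s0 a0 := by
    simp [mul_ite, Finset.sum_ite_eq']
  have h2 : (∑ s, cfun q x s * (γ * (uVec K γ ρ x s0 * ∑ s', B s s' * K s0 a0 s')))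
      = γ * uVec K γ ρ x s0 * ∑ s', vVec K q γ x s' * K s0 a0 s' := by
    have : ∀ s : S, cfun q x s * (γ * (uVec K γ ρ x s0 * ∑ s', B s s' * K s0 a0 s'))
        = γ * uVec K γ ρ x s0 * ∑ s', (cfun q x s * B s s') * K s0 a0 s' := by
      intro s
      simp only [Finset.mul_sum]
      exact Finset.sum_congr rfl fun s' _ => by ring
    rw [Finset.sum_congr rfl fun s _ => this s, ← Finset.mul_sum, Finset.sum_comm]
    congr 1
    refine Finset.sum_congr rfl fun s' _ => ?_
    rw [← Finset.sum_mul]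
    congr 1
  rw [h1, h2]
  unfold Qf
  rw [Finset.mul_sum, mul_add]
  congr 1
  rw [Finset.mul_sum, Finset.mul_sum]
  exact Finset.sum_congr rfl fun s' _ => by ring


lemma sum_mulVec_mul (N : Matrix S S ℝ) (a b : S → ℝ) :
    ∑ s, (N *ᵥ a) s * b s = ∑ s, a s * (b ᵥ* N) s := by
  simp only [Matrix.mulVec, Matrix.vecMul, dotProduct, Finset.sum_mul, Finset.mul_sum]
  rw [Finset.sum_comm]
  exact Finset.sum_congr rfl fun s _ => Finset.sum_congr rfl fun s' _ => by ring

lemma vecMul_smulMat (v : S → ℝ) (c : ℝ) (M : Matrix S S ℝ) :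
    v ᵥ* (c • M) = c • (v ᵥ* M) := by
  ext i
  simp only [Matrix.vecMul, dotProduct, Matrix.smul_apply, Pi.smul_apply, smul_eq_mul,
    Finset.mul_sum]
  exact Finset.sum_congr rfl fun j _ => by ring

lemma Jfun_eq_rho_v (K : S → Av → S → ℝ) (q : S → Av → ℝ) (γ : ℝ) (ρ : S → ℝ)
    (x : EuclideanSpace ℝ (S × Av)) :
    Jfun K q γ ρ x = ∑ s, ρ s * vVec K q γ x s :=
  sum_mulVec_mul _ ρ (cfun q x)

lemma vecMul_Amat (K : S → Av → S → ℝ) (q : S → Av → ℝ) (γ : ℝ)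
    (x : EuclideanSpace ℝ (S × Av)) (hunit : IsUnit (Amat K γ x)) :
    vVec K q γ x ᵥ* Amat K γ x = cfun q x := by
  unfold vVec
  rw [Matrix.vecMul_vecMul,
    Matrix.nonsing_inv_mul _ ((Matrix.isUnit_iff_isUnit_det _).mp hunit), Matrix.vecMul_one]

lemma shuffle (K : S → Av → S → ℝ) (q : S → Av → ℝ) (γ : ℝ) (w : S → ℝ)
    (y : EuclideanSpace ℝ (S × Av)) (s : S) :
    cfun q y s + γ * (w ᵥ* Mlin K y) s
      = ∑ a, y (s, a) * (q s a + γ * ∑ s', K s a s' * w s') := by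
  unfold cfun
  have h1 : (w ᵥ* Mlin K y) s
      = ∑ a, y (s, a) * ∑ s', K s a s' * w s' := by
    show (∑ s', w s' * ∑ a, y (s, a) * K s a s') = _
    simp only [Finset.mul_sum]
    rw [Finset.sum_comm]
    exact Finset.sum_congr rfl fun a _ => Finset.sum_congr rfl fun s' _ => by ring
  rw [h1]
  rw [Finset.mul_sum, ← Finset.sum_add_distrib]
  exact Finset.sum_congr rfl fun a _ => by ring

lemma vVec_apply (K : S → Av → S → ℝ) (q : S → Av → ℝ) (γ : ℝ)
    (x : EuclideanSpace ℝ (S × Av)) (hunit : IsUnit (Amat K γ x)) (s : S) :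
    vVec K q γ x s = ∑ a, x (s, a) * Qf K q γ x s a := by
  have h := congrFun (vecMul_Amat K q γ x hunit) s
  unfold Amat at h
  rw [Matrix.vecMul_sub, vecMul_smulMat, Matrix.vecMul_one] at h
  have h2 : vVec K q γ x s - γ * (vVec K q γ x ᵥ* Mlin K x) s = cfun q x s := by
    simpa using h
  have h3 : vVec K q γ x s = cfun q x s + γ * (vVec K q γ x ᵥ* Mlin K x) s := by linarith
  rw [h3, shuffle]
  rfl

lemma perf_diff (K : S → Av → S → ℝ) (q : S → Av → ℝ) (γ : ℝ) (ρ : S → ℝ)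
    (x y : EuclideanSpace ℝ (S × Av)) (hux : IsUnit (Amat K γ x))
    (huy : IsUnit (Amat K γ y)) :
    Jfun K q γ ρ y - Jfun K q γ ρ x
      = ∑ s, uVec K γ ρ y s *
          ((∑ a, y (s, a) * Qf K q γ x s a) - vVec K q γ x s) := by
  rw [Jfun_eq_rho_v, Jfun_eq_rho_v]
  set z : S → ℝ := cfun q y - (vVec K q γ x ᵥ* Amat K γ y) with hz
  have key : ∀ s, vVec K q γ y s - vVec K q γ x s = (z ᵥ* (Amat K γ y)⁻¹) s := by
    intro s
    rw [hz, Matrix.sub_vecMul, Matrix.vecMul_vecMul,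
      Matrix.mul_nonsing_inv _ ((Matrix.isUnit_iff_isUnit_det _).mp huy), Matrix.vecMul_one]
    simp [vVec]
  have lhs : ∑ s, ρ s * vVec K q γ y s - ∑ s, ρ s * vVec K q γ x s
      = ∑ s, ρ s * (z ᵥ* (Amat K γ y)⁻¹) s := by
    rw [← Finset.sum_sub_distrib]
    exact Finset.sum_congr rfl fun s _ => by rw [← key s]; ring
  rw [lhs, ← sum_mulVec_mul]
  refine Finset.sum_congr rfl fun s _ => ?_
  have hzs : z s = (∑ a, y (s, a) * Qf K q γ x s a) - vVec K q γ x s := by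
    rw [hz]
    show cfun q y s - (vVec K q γ x ᵥ* Amat K γ y) s = _
    unfold Amat
    rw [Matrix.vecMul_sub, vecMul_smulMat, Matrix.vecMul_one]
    have : cfun q y s - (vVec K q γ x s - γ * (vVec K q γ x ᵥ* Mlin K y) s)
        = (cfun q y s + γ * (vVec K q γ x ᵥ* Mlin K y) s) - vVec K q γ x s := by ring
    simp only [Pi.sub_apply, Pi.smul_apply, smul_eq_mul]
    rw [this, shuffle]
    rfl
  rw [hzs]
  rfl


end VGD

/-- gradient domination for the victim:
`max_{ν'} J(ν',α) - J(ν,α) ≤ (1/(1-γ)) · max_s (d_ρ^{π_ν*, mix(α)}(s)/ρ(s)) ·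
max_{ν̄ ∈ Δ} ⟨∇_ν J(ν,α), ν̄ - ν⟩`, for any maximizer `ν*`. -/
theorem victim_gradient_domination {S Av Aa : Type*}
    [Fintype S] [Nonempty S] [DecidableEq S]
    [Fintype Av] [Nonempty Av] [Fintype Aa] [Nonempty Aa]
    (P : S → Av → Aa → S → ℝ)
    (hP0 : ∀ s av aa s', 0 ≤ P s av aa s')
    (hP1 : ∀ s av aa, ∑ s', P s av aa s' = 1)
    (r : S → Av → Aa → ℝ)
    (hr0 : ∀ s av aa, 0 ≤ r s av aa) (hr1 : ∀ s av aa, r s av aa ≤ 1)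
    (γ : ℝ) (hγ0 : 0 ≤ γ) (hγ1 : γ < 1)
    (ρ : S → ℝ) (hρ0 : ∀ s, 0 < ρ s) (hρ1 : ∑ s, ρ s = 1)
    (pihat : S → Aa → ℝ)
    (hpihat0 : ∀ s a, 0 ≤ pihat s a) (hpihat1 : ∀ s, ∑ a, pihat s a = 1)
    (ε : ℝ) (hε0 : 0 ≤ ε) (hε1 : ε ≤ 1)
    (ν : EuclideanSpace ℝ (S × Av)) (α : EuclideanSpace ℝ (S × Aa))
    (hν : inPolicySimplex ν) (hα : inPolicySimplex α)
    (νstar : EuclideanSpace ℝ (S × Av)) (hνstar : inPolicySimplex νstar)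
    (hνstarMax : ∀ ν' : EuclideanSpace ℝ (S × Av), inPolicySimplex ν' →
      Jobj P r γ ε ρ pihat ν' α ≤ Jobj P r γ ε ρ pihat νstar α) :
    Jobj P r γ ε ρ pihat νstar α - Jobj P r γ ε ρ pihat ν α ≤
      (1 / (1 - γ)) *
        (Finset.univ.sup' Finset.univ_nonempty fun s =>
          stateVisitation P γ ρ (fun s a => νstar (s, a))
            (fun s a => (1 - ε) * pihat s a + ε * α (s, a)) s / ρ s) *
        sSup ((fun nubar : EuclideanSpace ℝ (S × Av) =>
          ⟪gradient (fun x => Jobj P r γ ε ρ pihat x α) ν, nubar - ν⟫) ''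
            {x | inPolicySimplex x}) := by
  classical
  set β : S → Aa → ℝ := fun s a => (1 - ε) * pihat s a + ε * α (s, a) with hβ
  set K : S → Av → S → ℝ := fun s a s' => ∑ aa, β s aa * P s a aa s' with hK
  set q : S → Av → ℝ := fun s a => ∑ aa, β s aa * r s a aa with hq
  -- basic facts on the mixed attacker policy
  have hβ0 : ∀ s a, 0 ≤ β s a := fun s a =>
    add_nonneg (mul_nonneg (by linarith) (hpihat0 s a)) (mul_nonneg hε0 (hα.1 (s, a)))
  have hβ1 : ∀ s, ∑ a, β s a = 1 := by
    intro s
    rw [hβ]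
    rw [Finset.sum_add_distrib, ← Finset.mul_sum, ← Finset.mul_sum, hpihat1 s, hα.2 s]
    ring
  have hK0 : ∀ s a s', 0 ≤ K s a s' := fun s a s' =>
    Finset.sum_nonneg fun aa _ => mul_nonneg (hβ0 s aa) (hP0 s a aa s')
  have hK1 : ∀ s a, ∑ s', K s a s' = 1 := by
    intro s a
    rw [hK]
    rw [Finset.sum_comm]
    calc (∑ aa, ∑ s', β s aa * P s a aa s') = ∑ aa, β s aa * ∑ s', P s a aa s' := by
          exact Finset.sum_congr rfl fun aa _ => (Finset.mul_sum _ _ _).symm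
      _ = 1 := by
          rw [Finset.sum_congr rfl fun aa _ => by rw [hP1 s a aa, mul_one]]
          exact hβ1 s
  -- the induced matrix of a policy, in `VGD` form
  have hind : ∀ x : EuclideanSpace ℝ (S × Av),
      inducedMatrix P (fun s a => x (s, a)) β = VGD.Mlin K x := by
    intro x
    ext s' s
    show (∑ av, ∑ aa, x (s, av) * β s aa * P s av aa s') = ∑ a, x (s, a) * K s a s'
    refine Finset.sum_congr rfl fun a _ => ?_
    rw [hK, Finset.mul_sum]
    exact Finset.sum_congr rfl fun aa _ => by ring
  have hmarg : ∀ (x : EuclideanSpace ℝ (S × Av)) (s : S),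
      marginalReward r (fun s a => x (s, a)) β s = VGD.cfun q x s := by
    intro x s
    show (∑ av, ∑ aa, x (s, av) * β s aa * r s av aa) = ∑ a, x (s, a) * q s a
    refine Finset.sum_congr rfl fun a _ => ?_
    rw [hq, Finset.mul_sum]
    exact Finset.sum_congr rfl fun aa _ => by ring
  have hJobj : ∀ x : EuclideanSpace ℝ (S × Av),
      Jobj P r γ ε ρ pihat x α = VGD.Jfun K q γ ρ x := by
    intro x
    unfold Jobj VGD.Jfun
    refine Finset.sum_congr rfl fun s _ => ?_
    rw [hind x, hmarg x s]
    rfl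
  -- stochasticity of the induced matrix for simplex policies
  have hM0 : ∀ x : EuclideanSpace ℝ (S × Av), inPolicySimplex x →
      ∀ s' s, 0 ≤ (VGD.Mlin K x) s' s := by
    intro x hx s' s
    exact Finset.sum_nonneg fun a _ => mul_nonneg (hx.1 (s, a)) (hK0 s a s')
  have hM1 : ∀ x : EuclideanSpace ℝ (S × Av), inPolicySimplex x →
      ∀ s, ∑ s', (VGD.Mlin K x) s' s = 1 := by
    intro x hx s
    have : ∀ s' : S, (VGD.Mlin K x) s' s = ∑ a, x (s, a) * K s a s' := fun s' => rfl
    calc (∑ s', (VGD.Mlin K x) s' s) = ∑ s', ∑ a, x (s, a) * K s a s' := by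
          exact Finset.sum_congr rfl fun s' _ => this s'
      _ = ∑ a, ∑ s', x (s, a) * K s a s' := Finset.sum_comm
      _ = ∑ a, x (s, a) := by
          refine Finset.sum_congr rfl fun a _ => ?_
          rw [← Finset.mul_sum, hK1 s a, mul_one]
      _ = 1 := hx.2 s
  have hunit : ∀ x : EuclideanSpace ℝ (S × Av), inPolicySimplex x →
      IsUnit (VGD.Amat K γ x) := fun x hx =>
    VGD.isUnit_one_sub (VGD.Mlin K x) (hM0 x hx) (hM1 x hx) hγ0 hγ1
  -- positivity facts about the occupancy vectors
  have huge : ∀ (x : EuclideanSpace ℝ (S × Av)), inPolicySimplex x →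
      ∀ s, ρ s ≤ VGD.uVec K γ ρ x s := by
    intro x hx s
    have h := VGD.inv_mulVec_le (VGD.Mlin K x) (hM0 x hx) (hM1 x hx) hγ0 hγ1 ρ
      (fun s => (hρ0 s).le) s
    rw [← Matrix.nonsing_inv_eq_ringInverse] at h
    exact h
  have hu0 : ∀ (x : EuclideanSpace ℝ (S × Av)), inPolicySimplex x →
      ∀ s, 0 ≤ VGD.uVec K γ ρ x s := fun x hx s => le_trans (hρ0 s).le (huge x hx s)
  -- identify the state visitation with the resolvent occupancy
  have hd : stateVisitation P γ ρ (fun s a => νstar (s, a)) β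
      = fun s => (1 - γ) * VGD.uVec K γ ρ νstar s := by
    unfold stateVisitation
    rw [hind νstar]
    have hs := (VGD.hasSum_geom_mulVec (VGD.Mlin K νstar) (hM0 νstar hνstar)
      (hM1 νstar hνstar) hγ0 hγ1 ρ).tsum_eq
    rw [hs, ← Matrix.nonsing_inv_eq_ringInverse]
    rfl
  -- the gradient of the objective
  set g : EuclideanSpace ℝ (S × Av) := VGD.gradVec K q γ ρ ν with hg
  have hgrad : gradient (fun x => Jobj P r γ ε ρ pihat x α) ν = g := by
    have : (fun x => Jobj P r γ ε ρ pihat x α) = VGD.Jfun K q γ ρ := funext hJobj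
    rw [this]
    exact (VGD.hasGradientAt_Jfun K q γ ρ ν (hunit ν hν)).gradient
  rw [hgrad]
  -- the greedy policy
  have hamax : ∀ s : S, ∃ a : Av, ∀ a' : Av, VGD.Qf K q γ ν s a' ≤ VGD.Qf K q γ ν s a := by
    intro s
    obtain ⟨b, _, hb⟩ := Finset.exists_max_image Finset.univ (fun a => VGD.Qf K q γ ν s a)
      Finset.univ_nonempty
    exact ⟨b, fun a' => hb a' (Finset.mem_univ a')⟩
  set amax : S → Av := fun s => (hamax s).choose with hamaxdef
  have hamax_spec : ∀ s a', VGD.Qf K q γ ν s a' ≤ VGD.Qf K q γ ν s (amax s) := fun s =>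
    (hamax s).choose_spec
  set nubar : EuclideanSpace ℝ (S × Av) := WithLp.toLp 2 (fun p : S × Av => if p.2 = amax p.1 then 1 else 0) with hnubar
  have hnubarS : inPolicySimplex nubar := by
    constructor
    · intro p
      rw [hnubar]
      dsimp only
      split <;> norm_num
    · intro s
      rw [hnubar]
      simp [Finset.sum_ite_eq']
  -- G s = max_a Q(s,a) - V(s) ≥ 0
  set G : S → ℝ := fun s => VGD.Qf K q γ ν s (amax s) - VGD.vVec K q γ ν s with hGdef
  have hconv : ∀ (y : EuclideanSpace ℝ (S × Av)), inPolicySimplex y → ∀ s,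
      (∑ a, y (s, a) * VGD.Qf K q γ ν s a) ≤ VGD.Qf K q γ ν s (amax s) := by
    intro y hy s
    calc (∑ a, y (s, a) * VGD.Qf K q γ ν s a)
        ≤ ∑ a, y (s, a) * VGD.Qf K q γ ν s (amax s) :=
          Finset.sum_le_sum fun a _ =>
            mul_le_mul_of_nonneg_left (hamax_spec s a) (hy.1 (s, a))
      _ = VGD.Qf K q γ ν s (amax s) := by rw [← Finset.sum_mul, hy.2 s, one_mul]
  have hG0 : ∀ s, 0 ≤ G s := by
    intro s
    rw [hGdef]
    dsimp only
    rw [VGD.vVec_apply K q γ ν (hunit ν hν) s]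
    have := hconv ν hν s
    linarith
  -- inner products with the gradient
  have hinner : ∀ y : EuclideanSpace ℝ (S × Av),
      ⟪g, y - ν⟫ = ∑ s, ∑ a, (VGD.uVec K γ ρ ν s * VGD.Qf K q γ ν s a) * (y (s, a) - ν (s, a)) := by
    intro y
    rw [PiLp.inner_apply, Fintype.sum_prod_type]
    refine Finset.sum_congr rfl fun s _ => Finset.sum_congr rfl fun a _ => ?_
    simp only [RCLike.inner_apply, starRingEnd_apply, star_trivial, PiLp.sub_apply]
    show (y (s, a) - ν (s, a)) * (VGD.uVec K γ ρ ν s * VGD.Qf K q γ ν s a) = _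
    ring
  have hinner_nubar : ⟪g, nubar - ν⟫ = ∑ s, VGD.uVec K γ ρ ν s * G s := by
    rw [hinner nubar]
    refine Finset.sum_congr rfl fun s _ => ?_
    have e1 : ∀ a : Av, (VGD.uVec K γ ρ ν s * VGD.Qf K q γ ν s a) * (nubar (s, a) - ν (s, a))
        = (VGD.uVec K γ ρ ν s * VGD.Qf K q γ ν s a) * nubar (s, a)
          - (VGD.uVec K γ ρ ν s * VGD.Qf K q γ ν s a) * ν (s, a) := fun a => by ring
    rw [Finset.sum_congr rfl fun a _ => e1 a, Finset.sum_sub_distrib]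
    have e2 : (∑ a, (VGD.uVec K γ ρ ν s * VGD.Qf K q γ ν s a) * nubar (s, a))
        = VGD.uVec K γ ρ ν s * VGD.Qf K q γ ν s (amax s) := by
      rw [hnubar]
      simp [mul_ite, Finset.sum_ite_eq']
    have e3 : (∑ a, (VGD.uVec K γ ρ ν s * VGD.Qf K q γ ν s a) * ν (s, a))
        = VGD.uVec K γ ρ ν s * VGD.vVec K q γ ν s := by
      rw [VGD.vVec_apply K q γ ν (hunit ν hν) s, Finset.mul_sum]
      exact Finset.sum_congr rfl fun a _ => by ring
    rw [e2, e3, hGdef]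
    ring
  -- bounding the sSup from below
  set T : Set ℝ := ((fun nubar : EuclideanSpace ℝ (S × Av) => ⟪g, nubar - ν⟫) ''
      {x | inPolicySimplex x}) with hT
  have hcoord1 : ∀ (x : EuclideanSpace ℝ (S × Av)), inPolicySimplex x → ∀ p : S × Av,
      x p ≤ 1 := by
    intro x hx p
    calc x p = x (p.1, p.2) := by rw [Prod.mk.eta]
      _ ≤ ∑ a, x (p.1, a) := Finset.single_le_sum
            (fun a _ => hx.1 (p.1, a)) (Finset.mem_univ p.2)
      _ = 1 := hx.2 p.1
  have hbdd : BddAbove T := by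
    refine ⟨∑ p : S × Av, |g p|, ?_⟩
    rintro z ⟨y, hy, rfl⟩
    show ⟪g, y - ν⟫ ≤ ∑ p : S × Av, |g p|
    rw [PiLp.inner_apply]
    refine Finset.sum_le_sum fun p _ => ?_
    simp only [RCLike.inner_apply, starRingEnd_apply, star_trivial, PiLp.sub_apply]
    rw [mul_comm]
    calc g p * (y p - ν p) ≤ |g p * (y p - ν p)| := le_abs_self _
      _ = |g p| * |y p - ν p| := abs_mul _ _
      _ ≤ |g p| * 1 := by
          refine mul_le_mul_of_nonneg_left ?_ (abs_nonneg _)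
          rw [abs_le]
          constructor
          · have := hy.1 p; have := hcoord1 ν hν p; linarith
          · have := hcoord1 y hy p; have := hν.1 p; linarith
      _ = |g p| := mul_one _
  have hsup_ge : ∑ s, ρ s * G s ≤ sSup T := by
    have h1 : ∑ s, ρ s * G s ≤ ∑ s, VGD.uVec K γ ρ ν s * G s :=
      Finset.sum_le_sum fun s _ => mul_le_mul_of_nonneg_right (huge ν hν s) (hG0 s)
    have h2 : ⟪g, nubar - ν⟫ ∈ T := ⟨nubar, hnubarS, rfl⟩
    calc ∑ s, ρ s * G s ≤ ∑ s, VGD.uVec K γ ρ ν s * G s := h1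
      _ = ⟪g, nubar - ν⟫ := hinner_nubar.symm
      _ ≤ sSup T := le_csSup hbdd h2
  -- the max ratio
  set maxU : ℝ := Finset.univ.sup' Finset.univ_nonempty
      (fun s => VGD.uVec K γ ρ νstar s / ρ s) with hmaxU
  have hratio : (1 / (1 - γ)) *
      (Finset.univ.sup' Finset.univ_nonempty fun s =>
        stateVisitation P γ ρ (fun s a => νstar (s, a)) β s / ρ s) = maxU := by
    have e1 : (fun s => stateVisitation P γ ρ (fun s a => νstar (s, a)) β s / ρ s)
        = fun s => (1 - γ) * (VGD.uVec K γ ρ νstar s / ρ s) := by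
      funext s
      rw [hd]
      ring
    rw [e1]
    have e2 : (Finset.univ.sup' Finset.univ_nonempty
        fun s => (1 - γ) * (VGD.uVec K γ ρ νstar s / ρ s))
        = (1 - γ) * maxU := by
      rw [hmaxU]
      refine (Finset.comp_sup'_eq_sup'_comp Finset.univ_nonempty
        (fun t : ℝ => (1 - γ) * t) (fun a b => ?_)).symm
      exact mul_max_of_nonneg a b (by linarith)
    rw [e2]
    have hne : (1 : ℝ) - γ ≠ 0 := by linarith
    field_simp
  have hmaxU0 : 0 ≤ maxU := by
    obtain ⟨s0⟩ := (inferInstance : Nonempty S)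
    calc (0 : ℝ) ≤ VGD.uVec K γ ρ νstar s0 / ρ s0 :=
          div_nonneg (hu0 νstar hνstar s0) (hρ0 s0).le
      _ ≤ maxU := by
          rw [hmaxU]
          exact Finset.le_sup' (fun s => VGD.uVec K γ ρ νstar s / ρ s) (Finset.mem_univ s0)
  have hu_le : ∀ s, VGD.uVec K γ ρ νstar s ≤ maxU * ρ s := by
    intro s
    have := Finset.le_sup' (fun s => VGD.uVec K γ ρ νstar s / ρ s) (Finset.mem_univ s)
    rw [← hmaxU] at this
    exact (div_le_iff₀ (hρ0 s)).mp this
  -- the main chain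
  rw [hJobj νstar, hJobj ν,
    VGD.perf_diff K q γ ρ ν νstar (hunit ν hν) (hunit νstar hνstar), hratio]
  calc (∑ s, VGD.uVec K γ ρ νstar s *
        ((∑ a, νstar (s, a) * VGD.Qf K q γ ν s a) - VGD.vVec K q γ ν s))
      ≤ ∑ s, VGD.uVec K γ ρ νstar s * G s := by
        refine Finset.sum_le_sum fun s _ => ?_
        refine mul_le_mul_of_nonneg_left ?_ (hu0 νstar hνstar s)
        rw [hGdef]
        have := hconv νstar hνstar s
        dsimp only
        linarith
    _ ≤ ∑ s, maxU * (ρ s * G s) := by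
        refine Finset.sum_le_sum fun s _ => ?_
        rw [← mul_assoc]
        exact mul_le_mul_of_nonneg_right (hu_le s) (hG0 s)
    _ = maxU * ∑ s, ρ s * G s := by rw [Finset.mul_sum]
    _ ≤ maxU * sSup T := mul_le_mul_of_nonneg_left hsup_ge hmaxU0
end
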